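/- arXiv:1102.1984 — 5 statements merged into one kernel-verified Lean document; each statement's English description precedes it below -/
import Mathlib

section
/- Let n ≥ 1 and let α be a tight stable n-set in ZMod (2n+2). Then α has exactly one outer neighbor: there exists a unique stable n-set β such that β is an outer neighbor of α. -/
/-!
Common definitions: stable n-sets in `ZMod (2*n+2)`, tight/loose sets, shifts,
outer neighbors, parity, the sets `P_i`, and adjacency in the stable Kneser
graph `SG_{n,2}` (two stable n-sets are adjacent iff they are disjoint).
-/

instance (n : ℕ) : NeZero (2 * n + 2) := ⟨by omega⟩

/-- A stable n-set: a finite subset of `ZMod (2n+2)` of cardinality `n`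
containing no two (cyclically) consecutive elements. -/
def IsStable (n : ℕ) (α : Finset (ZMod (2 * n + 2))) : Prop :=
  α.card = n ∧ ∀ i : ZMod (2 * n + 2), ¬(i ∈ α ∧ i + 1 ∈ α)

/-- A set is tight if it has the form `{i, i+2, i+4, …, i+2(n-1)}`. -/
def IsTight (n : ℕ) (α : Finset (ZMod (2 * n + 2))) : Prop :=
  ∃ i : ZMod (2 * n + 2), α = (Finset.range n).image (fun k : ℕ => i + 2 * (k : ZMod (2 * n + 2)))

/-- `α ⊕ j`, the shift of `α` by `j`. -/
def oplus (n : ℕ) (α : Finset (ZMod (2 * n + 2))) (j : ZMod (2 * n + 2)) :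
    Finset (ZMod (2 * n + 2)) :=
  α.image (fun a => a + j)

/-- `α ⊖ j`, the shift of `α` by `-j`. -/
def ominus (n : ℕ) (α : Finset (ZMod (2 * n + 2))) (j : ZMod (2 * n + 2)) :
    Finset (ZMod (2 * n + 2)) :=
  α.image (fun a => a - j)

/-- `β` is an outer neighbor of `α`: they are disjoint and
`β = ((α \ {a}) ⊕ 1) ∪ {a + 2}` for some `a ∈ α`. -/
def OuterNbr (n : ℕ) (α β : Finset (ZMod (2 * n + 2))) : Prop :=
  Disjoint α β ∧ ∃ a ∈ α, β = oplus n (α.erase a) 1 ∪ {a + 2}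

/-- The parity of an element of `ZMod (2n+2)`: its image in `ZMod 2` under the
natural ring homomorphism. -/
def parity (n : ℕ) (a : ZMod (2 * n + 2)) : ZMod 2 :=
  ZMod.castHom (show (2 : ℕ) ∣ 2 * n + 2 from ⟨n + 1, by ring⟩) (ZMod 2) a

/-- Adjacency in the stable Kneser graph `SG_{n,2}`: two distinct stable n-sets
are adjacent iff they are disjoint. -/
def SGAdj (n : ℕ) (α β : Finset (ZMod (2 * n + 2))) : Prop :=
  IsStable n α ∧ IsStable n β ∧ α ≠ β ∧ Disjoint α β

/-- `P_i`: stable n-sets with exactly `i` even elements and `n - i` odd elements. -/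
def Pset (n i : ℕ) : Set (Finset (ZMod (2 * n + 2))) :=
  {α | IsStable n α ∧ (α.filter fun a => parity n a = 0).card = i ∧
       (α.filter fun a => parity n a = 1).card = n - i}
/-- Casting doubles is injective on `[0, n]`. -/
lemma even_inj (n : ℕ) (i : ZMod (2 * n + 2)) (k m : ℕ) (hk : k ≤ n) (hm : m ≤ n)
    (h : i + 2 * (k : ZMod (2 * n + 2)) = i + 2 * (m : ZMod (2 * n + 2))) : k = m := by
  have h' : ((2 * k : ℕ) : ZMod (2 * n + 2)) = ((2 * m : ℕ) : ZMod (2 * n + 2)) := by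
    push_cast
    exact add_left_cancel h
  have := congrArg ZMod.val h'
  rw [ZMod.val_natCast_of_lt (by omega), ZMod.val_natCast_of_lt (by omega)] at this
  omega

/-- An "even" element never equals an "odd" element. -/
lemma even_ne_odd (n : ℕ) (i : ZMod (2 * n + 2)) (k m : ℕ) :
    i + 2 * (k : ZMod (2 * n + 2)) ≠ i + 2 * (m : ZMod (2 * n + 2)) + 1 := by
  intro h
  have h2 : (2 : ZMod 2) = 0 := by decide
  have := congrArg (parity n) h
  simp only [parity, map_add, map_mul, map_natCast, map_one, map_ofNat, h2, zero_mul,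
    add_zero] at this
  exact one_ne_zero (by linear_combination -this)

/-- Every tight stable n-set has a unique outer neighbor. -/
theorem tight_unique_outer_neighbor (n : ℕ) (hn : 1 ≤ n)
    (α : Finset (ZMod (2 * n + 2))) (hα : IsStable n α) (hαt : IsTight n α) :
    ∃! β : Finset (ZMod (2 * n + 2)), IsStable n β ∧ OuterNbr n α β := by
  obtain ⟨i, hi⟩ := hαt
  have hmem : ∀ x, x ∈ α ↔ ∃ k, k < n ∧ x = i + 2 * (k : ZMod (2 * n + 2)) := by
    intro x
    simp only [hi, Finset.mem_image, Finset.mem_range]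
    constructor
    · rintro ⟨k, hk, rfl⟩; exact ⟨k, hk, rfl⟩
    · rintro ⟨k, hk, rfl⟩; exact ⟨k, hk, rfl⟩
  set a : ZMod (2 * n + 2) := i + 2 * ((n - 1 : ℕ) : ZMod (2 * n + 2)) with ha
  have haα : a ∈ α := (hmem a).2 ⟨n - 1, by omega, rfl⟩
  have ha2 : a + 2 = i + 2 * ((n : ℕ) : ZMod (2 * n + 2)) := by
    rw [ha, Nat.cast_sub hn]
    push_cast
    ring
  set β : Finset (ZMod (2 * n + 2)) := oplus n (α.erase a) 1 ∪ {a + 2} with hβdef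
  have hβmem : ∀ x, x ∈ β ↔
      (∃ k, k < n - 1 ∧ x = i + 2 * (k : ZMod (2 * n + 2)) + 1) ∨ x = a + 2 := by
    intro x
    simp only [hβdef, Finset.mem_union, Finset.mem_singleton, oplus, Finset.mem_image,
      Finset.mem_erase]
    constructor
    · rintro (⟨y, ⟨hya, hyα⟩, rfl⟩ | h)
      · obtain ⟨k, hk, rfl⟩ := (hmem y).1 hyα
        refine Or.inl ⟨k, ?_, rfl⟩
        rcases Nat.lt_or_ge k (n - 1) with h' | h'
        · exact h'
        · have hkeq : k = n - 1 := by omega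
          exact absurd (by rw [ha, hkeq]) hya
      · exact Or.inr h
    · rintro (⟨k, hk, rfl⟩ | rfl)
      · refine Or.inl ⟨i + 2 * (k : ZMod (2 * n + 2)), ⟨?_, (hmem _).2 ⟨k, by omega, rfl⟩⟩, rfl⟩
        rw [ha]
        intro h
        have := even_inj n i k (n - 1) (by omega) (by omega) h
        omega
      · exact Or.inr rfl
  -- disjointness of α and β
  have hdisj : Disjoint α β := by
    rw [Finset.disjoint_left]
    intro x hxα hxβ
    obtain ⟨k, hk, rfl⟩ := (hmem x).1 hxα
    rcases (hβmem _).1 hxβ with ⟨m, hm, h⟩ | h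
    · exact even_ne_odd n i k m h
    · rw [ha2] at h
      have := even_inj n i k n (by omega) le_rfl h
      omega
  -- a + 2 is not in the shifted part
  have ha2notodd : ∀ m : ℕ, a + 2 ≠ i + 2 * (m : ZMod (2 * n + 2)) + 1 := by
    intro m h
    rw [ha2] at h
    exact even_ne_odd n i n m h
  -- β is stable
  have hβcard : β.card = n := by
    have hinj : Function.Injective (fun x : ZMod (2 * n + 2) => x + 1) :=
      add_left_injective 1
    have h1 : (oplus n (α.erase a) 1).card = n - 1 := by
      rw [oplus, Finset.card_image_of_injective _ hinj, Finset.card_erase_of_mem haα,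
        hα.1]
    have h2 : Disjoint (oplus n (α.erase a) 1) {a + 2} := by
      rw [Finset.disjoint_singleton_right]
      intro hmem'
      obtain ⟨y, hy, hy'⟩ := Finset.mem_image.1 hmem'
      obtain ⟨k, hk, rfl⟩ := (hmem y).1 (Finset.mem_of_mem_erase hy)
      exact ha2notodd k hy'.symm
    rw [hβdef, Finset.card_union_of_disjoint h2, h1, Finset.card_singleton]
    omega
  have hβstable : IsStable n β := by
    refine ⟨hβcard, ?_⟩
    rintro j ⟨hj, hj1⟩
    rcases (hβmem j).1 hj with ⟨k, hk, rfl⟩ | rfl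
    · rcases (hβmem _).1 hj1 with ⟨m, hm, h⟩ | h
      · -- i + 2k + 1 + 1 = i + 2m + 1 : even = odd
        have : i + 2 * ((k + 1 : ℕ) : ZMod (2 * n + 2)) = i + 2 * (m : ZMod (2 * n + 2)) + 1 := by
          push_cast
          linear_combination h
        exact even_ne_odd n i (k + 1) m this
      · -- i + 2k + 2 = a + 2 = i + 2n
        rw [ha2] at h
        have : i + 2 * ((k + 1 : ℕ) : ZMod (2 * n + 2)) = i + 2 * (n : ZMod (2 * n + 2)) := by
          push_cast
          linear_combination h
        have := even_inj n i (k + 1) n (by omega) le_rfl this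
        omega
    · rcases (hβmem _).1 hj1 with ⟨m, hm, h⟩ | h
      · -- a + 2 + 1 = i + 2m + 1, i.e. i + 2n = i + 2m
        rw [ha2] at h
        have : i + 2 * (n : ZMod (2 * n + 2)) = i + 2 * (m : ZMod (2 * n + 2)) := by
          linear_combination h
        have := even_inj n i n m le_rfl (by omega) this
        omega
      · -- a + 2 + 1 = a + 2
        haveI : Fact (1 < 2 * n + 2) := ⟨by omega⟩
        have : (1 : ZMod (2 * n + 2)) = 0 := by linear_combination h
        exact one_ne_zero this
  refine ⟨β, ⟨hβstable, hdisj, a, haα, rfl⟩, ?_⟩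
  rintro β' ⟨hβ's, hdisj', a', ha'α, rfl⟩
  obtain ⟨k, hk, rfl⟩ := (hmem a').1 ha'α
  have hkn : k = n - 1 := by
    by_contra hne
    have h1 : i + 2 * (k : ZMod (2 * n + 2)) + 2 ∈ α := by
      refine (hmem _).2 ⟨k + 1, by omega, ?_⟩
      push_cast
      ring
    have h2 : i + 2 * (k : ZMod (2 * n + 2)) + 2 ∈
        oplus n (α.erase (i + 2 * (k : ZMod (2 * n + 2)))) 1 ∪
          {i + 2 * (k : ZMod (2 * n + 2)) + 2} :=
      Finset.mem_union_right _ (Finset.mem_singleton_self _)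
    exact Finset.disjoint_left.1 hdisj' h1 h2
  subst hkn
  rfl
end

section
/- Let n ≥ 2 and let α be a tight stable n-set in ZMod (2n+2). Then α has exactly n + 2 neighbors in SG_{n,2}: the n + 1 tight stable n-sets all of whose elements have parity opposite to that of the elements of α, together with exactly one further neighbor, which is loose (namely the unique outer neighbor of α). -/
namespace TNA

lemma lmod2 {M a b : ℕ} (h : a % M = b % M) (ha : a < 2*M) (hb : b < 2*M) :
    a = b ∨ a = b + M ∨ b = a + M := by
  rcases Nat.lt_or_ge a M with h1 | h1 <;> rcases Nat.lt_or_ge b M with h2 | h2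
  · rw [Nat.mod_eq_of_lt h1, Nat.mod_eq_of_lt h2] at h; omega
  · rw [Nat.mod_eq_of_lt h1, Nat.mod_eq_sub_mod h2, Nat.mod_eq_of_lt (by omega)] at h; omega
  · rw [Nat.mod_eq_sub_mod h1, Nat.mod_eq_of_lt (by omega), Nat.mod_eq_of_lt h2] at h; omega
  · rw [Nat.mod_eq_sub_mod h1, Nat.mod_eq_sub_mod h2, Nat.mod_eq_of_lt (by omega),
      Nat.mod_eq_of_lt (by omega)] at h; omega

lemma cast_add_M {n : ℕ} (b : ℕ) :
    ((b + (2*n+2) : ℕ) : ZMod (2*n+2)) = (b : ZMod (2*n+2)) := by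
  rw [Nat.cast_add, ZMod.natCast_self, add_zero]

lemma e_eq {n : ℕ} {i : ZMod (2*n+2)} {a b : ℕ} (ha : a < 2*(2*n+2)) (hb : b < 2*(2*n+2)) :
    i + (a : ZMod (2*n+2)) = i + (b : ZMod (2*n+2)) ↔
      (a = b ∨ a = b + (2*n+2) ∨ b = a + (2*n+2)) := by
  constructor
  · intro h
    have h' : (a : ZMod (2*n+2)) = (b : ZMod (2*n+2)) := add_left_cancel h
    exact lmod2 ((ZMod.natCast_eq_natCast_iff' a b (2*n+2)).mp h') ha hb
  · rintro (rfl | rfl | rfl)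
    · rfl
    · rw [cast_add_M]
    · rw [cast_add_M]

lemma rep {n : ℕ} (i x : ZMod (2*n+2)) : ∃ j < 2*n+2, x = i + (j : ZMod (2*n+2)) :=
  ⟨(x - i).val, ZMod.val_lt _, by rw [ZMod.natCast_rightInverse (x - i)]; ring⟩

lemma e_succ {n : ℕ} (i : ZMod (2*n+2)) (j : ℕ) :
    i + (j : ZMod (2*n+2)) + 1 = i + ((j+1 : ℕ) : ZMod (2*n+2)) := by push_cast; ring

lemma parity_shift {n : ℕ} (x : ZMod (2*n+2)) (j : ℕ) :
    parity n (x + (j : ZMod (2*n+2))) = parity n x + (j : ZMod 2) := by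
  simp [parity, map_add, map_natCast]

lemma even_cast2 (k : ℕ) : ((2*k : ℕ) : ZMod 2) = 0 := by
  have h2 : ((2:ℕ) : ZMod 2) = 0 := by decide
  rw [Nat.cast_mul, h2, zero_mul]

lemma odd_cast2 (k : ℕ) : ((2*k+1 : ℕ) : ZMod 2) = 1 := by
  have h2 : ((2:ℕ) : ZMod 2) = 0 := by decide
  rw [Nat.cast_add, Nat.cast_mul, h2, zero_mul, zero_add, Nat.cast_one]

lemma one_ne_zero2 : (1 : ZMod 2) ≠ 0 := by decide

/-- tight set as a `Finset`, syntactically identical to the set in `IsTight`. -/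
def Tf (n : ℕ) (j : ZMod (2*n+2)) : Finset (ZMod (2*n+2)) :=
  (Finset.range n).image (fun k : ℕ => j + 2 * (k : ZMod (2*n+2)))

lemma mem_Tf {n : ℕ} {j x : ZMod (2*n+2)} :
    x ∈ Tf n j ↔ ∃ k < n, x = j + ((2*k : ℕ) : ZMod (2*n+2)) := by
  simp only [Tf, Finset.mem_image, Finset.mem_range]
  constructor
  · rintro ⟨k, hk, rfl⟩; exact ⟨k, hk, by push_cast; ring⟩
  · rintro ⟨k, hk, rfl⟩; exact ⟨k, hk, by push_cast; ring⟩

lemma card_Tf {n : ℕ} (j : ZMod (2*n+2)) : (Tf n j).card = n := by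
  rw [Tf, Finset.card_image_of_injOn, Finset.card_range]
  intro k hk k' hk' h
  simp only [Finset.coe_range, Set.mem_Iio] at hk hk'
  have h' : j + ((2*k : ℕ) : ZMod (2*n+2)) = j + ((2*k' : ℕ) : ZMod (2*n+2)) := by
    push_cast; push_cast at h; linear_combination h
  rw [e_eq (by omega) (by omega)] at h'
  omega

lemma stable_Tf {n : ℕ} (j : ZMod (2*n+2)) :
    (Tf n j).card = n ∧ ∀ x : ZMod (2*n+2), ¬(x ∈ Tf n j ∧ x + 1 ∈ Tf n j) := by
  refine ⟨card_Tf j, ?_⟩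
  rintro x ⟨hx, hx1⟩
  rw [mem_Tf] at hx hx1
  obtain ⟨k, hk, rfl⟩ := hx
  obtain ⟨k', hk', h⟩ := hx1
  rw [e_succ] at h
  rw [e_eq (by omega) (by omega)] at h
  omega

def Oset (n : ℕ) (i : ZMod (2*n+2)) : Finset (ZMod (2*n+2)) :=
  (Finset.range (n+1)).image (fun k : ℕ => i + ((2*k+1 : ℕ) : ZMod (2*n+2)))

lemma mem_O {n : ℕ} {i x : ZMod (2*n+2)} :
    x ∈ Oset n i ↔ ∃ k < n+1, x = i + ((2*k+1 : ℕ) : ZMod (2*n+2)) := by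
  simp only [Oset, Finset.mem_image, Finset.mem_range]
  constructor
  · rintro ⟨k, hk, rfl⟩; exact ⟨k, hk, rfl⟩
  · rintro ⟨k, hk, rfl⟩; exact ⟨k, hk, rfl⟩

lemma card_O {n : ℕ} (i : ZMod (2*n+2)) : (Oset n i).card = n + 1 := by
  rw [Oset, Finset.card_image_of_injOn, Finset.card_range]
  intro k hk k' hk' h
  simp only [Finset.coe_range, Set.mem_Iio] at hk hk'
  rw [e_eq (by omega) (by omega)] at h
  omega

/-- the complement of a tight set -/
lemma notMem_Tf {n : ℕ} {i x : ZMod (2*n+2)} :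
    x ∉ Tf n i ↔ (x = i + ((2*n : ℕ) : ZMod (2*n+2)) ∨ ∃ k < n+1, x = i + ((2*k+1 : ℕ) : ZMod (2*n+2))) := by
  obtain ⟨j, hj, rfl⟩ := rep i x
  constructor
  · intro hx
    rcases Nat.even_or_odd j with ⟨k, hk⟩ | ⟨k, hk⟩
    · by_cases hkn : k < n
      · exact absurd (mem_Tf.mpr ⟨k, hkn, by rw [e_eq (by omega) (by omega)]; omega⟩) hx
      · left
        rw [e_eq (by omega) (by omega)]; omega
    · right
      exact ⟨k, by omega, by rw [e_eq (by omega) (by omega)]; omega⟩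
  · rintro (h | ⟨k, hk, h⟩) hmem <;> rw [mem_Tf] at hmem <;> obtain ⟨k', hk', h'⟩ := hmem <;>
      rw [h'] at h <;> rw [e_eq (by omega) (by omega)] at h <;> omega

lemma erase_inj {α : Type*} [DecidableEq α] {s : Finset α} {x y : α}
    (hx : x ∈ s) (h : s.erase x = s.erase y) : x = y := by
  by_contra hne
  have h1 : x ∈ s.erase y := Finset.mem_erase.mpr ⟨hne, hx⟩
  rw [← h] at h1
  exact Finset.notMem_erase x s h1

lemma LT {n : ℕ} (i : ZMod (2*n+2)) {m : ℕ} (hm : m ≤ n) :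
    Tf n (i + ((2*m+3 : ℕ) : ZMod (2*n+2))) = (Oset n i).erase (i + ((2*m+1 : ℕ) : ZMod (2*n+2))) := by
  apply Finset.eq_of_subset_of_card_le
  · intro y hy
    rw [mem_Tf] at hy
    obtain ⟨k, hk, rfl⟩ := hy
    have hform : i + ((2*m+3 : ℕ) : ZMod (2*n+2)) + ((2*k : ℕ) : ZMod (2*n+2))
        = i + ((2*m+3+2*k : ℕ) : ZMod (2*n+2)) := by push_cast; ring
    rw [hform]
    rcases Nat.lt_or_ge (2*m+3+2*k) (2*n+2) with hc | hc
    · refine Finset.mem_erase.mpr ⟨?_, mem_O.mpr ⟨m+k+1, by omega, by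
        rw [e_eq (by omega) (by omega)]; omega⟩⟩
      rw [Ne, e_eq (by omega) (by omega)]; omega
    · have hrw : i + ((2*m+3+2*k : ℕ) : ZMod (2*n+2))
          = i + ((2*m+3+2*k - (2*n+2) : ℕ) : ZMod (2*n+2)) := by
        rw [e_eq (by omega) (by omega)]; omega
      rw [hrw]
      refine Finset.mem_erase.mpr ⟨?_, mem_O.mpr ⟨m+k-n, by omega, by rw [e_eq (by omega) (by omega)]; omega⟩⟩
      rw [Ne, e_eq (by omega) (by omega)]; omega
  · rw [card_Tf, Finset.card_erase_of_mem (mem_O.mpr ⟨m, by omega, rfl⟩), card_O]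
    omega


end TNA

namespace TNA

variable {n : ℕ} {i : ZMod (2*n+2)}

def eta (n : ℕ) (i : ZMod (2*n+2)) : Finset (ZMod (2*n+2)) :=
  (Finset.range (n-1)).image (fun k : ℕ => i + ((2*k+1 : ℕ) : ZMod (2*n+2))) ∪
    {i + ((2*n : ℕ) : ZMod (2*n+2))}

lemma mem_eta {x : ZMod (2*n+2)} :
    x ∈ eta n i ↔ (∃ k < n-1, x = i + ((2*k+1 : ℕ) : ZMod (2*n+2))) ∨
      x = i + ((2*n : ℕ) : ZMod (2*n+2)) := by
  simp only [eta, Finset.mem_union, Finset.mem_image, Finset.mem_range, Finset.mem_singleton]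
  constructor
  · rintro (⟨k, hk, rfl⟩ | rfl)
    · exact Or.inl ⟨k, hk, rfl⟩
    · exact Or.inr rfl
  · rintro (⟨k, hk, rfl⟩ | rfl)
    · exact Or.inl ⟨k, hk, rfl⟩
    · exact Or.inr rfl

lemma card_eta (hn : 2 ≤ n) : (eta n i).card = n := by
  rw [eta, Finset.card_union_of_disjoint, Finset.card_image_of_injOn, Finset.card_range,
    Finset.card_singleton]
  · omega
  · intro k hk k' hk' h
    simp only [Finset.coe_range, Set.mem_Iio] at hk hk'
    rw [e_eq (by omega) (by omega)] at h
    omega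
  · rw [Finset.disjoint_singleton_right]
    simp only [Finset.mem_image, Finset.mem_range, not_exists]
    intro k hk
    obtain ⟨hk1, h⟩ := hk
    rw [e_eq (by omega) (by omega)] at h
    omega

lemma stable_eta (hn : 2 ≤ n) : IsStable n (eta n i) := by
  refine ⟨card_eta hn, ?_⟩
  rintro x ⟨hx, hx1⟩
  rw [mem_eta] at hx hx1
  rcases hx with ⟨k, hk, rfl⟩ | rfl
  · rw [e_succ] at hx1
    rcases hx1 with ⟨k', hk', h⟩ | h
    · rw [e_eq (by omega) (by omega)] at h; omega
    · rw [e_eq (by omega) (by omega)] at h; omega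
  · rw [e_succ] at hx1
    rcases hx1 with ⟨k', hk', h⟩ | h
    · rw [e_eq (by omega) (by omega)] at h; omega
    · rw [e_eq (by omega) (by omega)] at h; omega

lemma not_tight_eta (hn : 2 ≤ n) : ¬ IsTight n (eta n i) := by
  rintro ⟨j, hj⟩
  have hj' : eta n i = Tf n j := hj
  have h1 : i + ((2*0+1 : ℕ) : ZMod (2*n+2)) ∈ eta n i := mem_eta.mpr (Or.inl ⟨0, by omega, rfl⟩)
  have h2 : i + ((2*n : ℕ) : ZMod (2*n+2)) ∈ eta n i := mem_eta.mpr (Or.inr rfl)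
  rw [hj', mem_Tf] at h1 h2
  obtain ⟨a, ha, hea⟩ := h1
  obtain ⟨b, hb, heb⟩ := h2
  have p1 := congrArg (parity n) hea
  have p2 := congrArg (parity n) heb
  rw [parity_shift, parity_shift, odd_cast2, even_cast2, add_zero] at p1
  rw [parity_shift, parity_shift, even_cast2, even_cast2, add_zero, add_zero] at p2
  exact one_ne_zero2 (by linear_combination p1 - p2)

lemma disj_eta (hn : 2 ≤ n) : Disjoint (Tf n i) (eta n i) := by
  rw [Finset.disjoint_left]
  intro x hx hx'
  obtain ⟨k, hk, rfl⟩ := mem_Tf.mp hx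
  rcases mem_eta.mp hx' with ⟨k', hk', h⟩ | h
  · rw [e_eq (by omega) (by omega)] at h; omega
  · rw [e_eq (by omega) (by omega)] at h; omega

lemma outer_eta (hn : 2 ≤ n) : OuterNbr n (Tf n i) (eta n i) := by
  have hn1 : (1:ℕ) ≤ n := by omega
  have ha2 : i + 2 * ((n-1 : ℕ) : ZMod (2*n+2)) + 2 = i + ((2*n : ℕ) : ZMod (2*n+2)) := by
    push_cast [Nat.cast_sub hn1]
    ring
  refine ⟨disj_eta hn, i + 2 * ((n-1 : ℕ) : ZMod (2*n+2)), ?_, ?_⟩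
  · exact mem_Tf.mpr ⟨n-1, by omega, by push_cast; ring⟩
  · ext x
    rw [mem_eta]
    simp only [oplus, Finset.mem_union, Finset.mem_image, Finset.mem_erase, Finset.mem_singleton,
      mem_Tf]
    constructor
    · rintro (⟨k, hk, rfl⟩ | rfl)
      · left
        refine ⟨i + ((2*k : ℕ) : ZMod (2*n+2)), ⟨?_, ⟨k, by omega, rfl⟩⟩, e_succ i (2*k)⟩
        intro h
        have h' : i + ((2*k : ℕ) : ZMod (2*n+2)) = i + ((2*(n-1) : ℕ) : ZMod (2*n+2)) := by
          rw [h]; push_cast; ring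
        rw [e_eq (by omega) (by omega)] at h'
        omega
      · right; exact ha2.symm
    · rintro (⟨y, ⟨hya, k, hk, rfl⟩, rfl⟩ | rfl)
      · left
        refine ⟨k, ?_, e_succ i (2*k)⟩
        have hne : ¬ (2*k = 2*(n-1) ∨ 2*k = 2*(n-1) + (2*n+2) ∨ 2*(n-1) = 2*k + (2*n+2)) := by
          intro h
          apply hya
          have : i + ((2*k : ℕ) : ZMod (2*n+2)) = i + ((2*(n-1) : ℕ) : ZMod (2*n+2)) :=
            (e_eq (by omega) (by omega)).mpr h
          rw [this]; push_cast; ring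
        omega
      · right; exact ha2

lemma main_eq (hn : 2 ≤ n) (i : ZMod (2*n+2)) :
    {β | IsStable n β ∧ Disjoint (Tf n i) β} =
      insert (eta n i) {β | IsStable n β ∧ IsTight n β ∧
        ∀ b ∈ β, ∀ a ∈ Tf n i, parity n b ≠ parity n a} := by
  ext β
  simp only [Set.mem_setOf_eq, Set.mem_insert_iff]
  constructor
  · rintro ⟨hst, hdis⟩
    by_cases hin : i + ((2*n : ℕ) : ZMod (2*n+2)) ∈ β
    · left
      have hsub : β ⊆ eta n i := by
        intro x hx
        have hxα : x ∉ Tf n i := Finset.disjoint_right.mp hdis hx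
        rw [notMem_Tf] at hxα
        rw [mem_eta]
        rcases hxα with h | ⟨k, hk, rfl⟩
        · right; exact h
        · left
          refine ⟨k, ?_, rfl⟩
          have hkn : k ≠ n := by
            intro hkeq
            apply hst.2 (i + ((2*n : ℕ) : ZMod (2*n+2)))
            refine ⟨hin, ?_⟩
            rw [e_succ]
            have heq : i + ((2*n+1 : ℕ) : ZMod (2*n+2)) = i + ((2*k+1 : ℕ) : ZMod (2*n+2)) :=
              (e_eq (by omega) (by omega)).mpr (by omega)
            rw [heq]; exact hx
          have hkn1 : k ≠ n - 1 := by
            intro hkeq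
            apply hst.2 (i + ((2*k+1 : ℕ) : ZMod (2*n+2)))
            refine ⟨hx, ?_⟩
            rw [e_succ]
            have heq : i + ((2*k+1+1 : ℕ) : ZMod (2*n+2)) = i + ((2*n : ℕ) : ZMod (2*n+2)) :=
              (e_eq (by omega) (by omega)).mpr (by omega)
            rw [heq]; exact hin
          omega
      have hcard : (eta n i).card ≤ β.card := by rw [card_eta hn, hst.1]
      exact Finset.eq_of_subset_of_card_le hsub hcard
    · right
      have hsubO : β ⊆ Oset n i := by
        intro x hx
        have hxα : x ∉ Tf n i := Finset.disjoint_right.mp hdis hx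
        rw [notMem_Tf] at hxα
        rcases hxα with h | ⟨k, hk, rfl⟩
        · rw [h] at hx; exact absurd hx hin
        · exact mem_O.mpr ⟨k, hk, rfl⟩
      have hlt : ¬ (Oset n i ⊆ β) := by
        intro hsub
        have := Finset.card_le_card hsub
        rw [card_O, hst.1] at this
        omega
      obtain ⟨x, hxO, hxβ⟩ := Finset.not_subset.mp hlt
      obtain ⟨m, hm, rfl⟩ := mem_O.mp hxO
      have hβ : β = (Oset n i).erase (i + ((2*m+1 : ℕ) : ZMod (2*n+2))) := by
        apply Finset.eq_of_subset_of_card_le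
        · intro y hy
          exact Finset.mem_erase.mpr ⟨fun h => hxβ (h ▸ hy), hsubO hy⟩
        · rw [Finset.card_erase_of_mem hxO, card_O, hst.1]
          omega
      have hTight : β = Tf n (i + ((2*m+3 : ℕ) : ZMod (2*n+2))) := by
        rw [hβ, LT i (by omega)]
      refine ⟨hst, ⟨_, hTight⟩, ?_⟩
      intro b hb a ha
      obtain ⟨kb, hkb, rfl⟩ := mem_O.mp (hsubO hb)
      obtain ⟨ka, hka, rfl⟩ := mem_Tf.mp ha
      rw [parity_shift, parity_shift, odd_cast2, even_cast2, add_zero]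
      intro h
      exact one_ne_zero2 (by linear_combination h)
  · rintro (rfl | ⟨hst, ht, hpar⟩)
    · exact ⟨stable_eta hn, disj_eta hn⟩
    · exact ⟨hst, Finset.disjoint_left.mpr fun a ha hb => hpar a hb a ha rfl⟩

def Sfin (n : ℕ) (i : ZMod (2*n+2)) : Finset (Finset (ZMod (2*n+2))) :=
  (Finset.range (n+1)).image (fun m : ℕ => Tf n (i + ((2*m+1 : ℕ) : ZMod (2*n+2))))

lemma S_eq (hn : 2 ≤ n) (i : ZMod (2*n+2)) :
    {β | IsStable n β ∧ IsTight n β ∧ ∀ b ∈ β, ∀ a ∈ Tf n i, parity n b ≠ parity n a} =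
      ↑(Sfin n i) := by
  ext β
  simp only [Set.mem_setOf_eq, Finset.mem_coe, Sfin, Finset.mem_image, Finset.mem_range]
  constructor
  · rintro ⟨hst, ⟨j, hj⟩, hpar⟩
    have hj' : β = Tf n j := hj
    have hjβ : j ∈ β := by
      rw [hj']
      exact mem_Tf.mpr ⟨0, by omega, by norm_num⟩
    have hiα : i ∈ Tf n i := mem_Tf.mpr ⟨0, by omega, by norm_num⟩
    have hne := hpar j hjβ i hiα
    obtain ⟨d, hd, rfl⟩ := rep i j
    rw [parity_shift] at hne
    rcases Nat.even_or_odd d with ⟨k, hk⟩ | ⟨k, hk⟩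
    · exfalso
      apply hne
      rw [show d = 2*k by omega, even_cast2, add_zero]
    · refine ⟨k, by omega, ?_⟩
      rw [hj']
      congr 1
      rw [e_eq (by omega) (by omega)]
      omega
  · rintro ⟨m, hm, rfl⟩
    refine ⟨stable_Tf _, ⟨_, rfl⟩, ?_⟩
    intro b hb a ha
    obtain ⟨kb, hkb, rfl⟩ := mem_Tf.mp hb
    obtain ⟨ka, hka, rfl⟩ := mem_Tf.mp ha
    rw [parity_shift, parity_shift, parity_shift, even_cast2, even_cast2, odd_cast2,
      add_zero, add_zero]
    intro h
    exact one_ne_zero2 (by linear_combination h)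

lemma key_erase (hn : 2 ≤ n) (i : ZMod (2*n+2)) {m r : ℕ} (hm : m < n+1) (hr : r < n+1)
    (hd : 2*m+1 = 2*r+3 ∨ 2*m+1 + (2*n+2) = 2*r+3) :
    Tf n (i + ((2*m+1 : ℕ) : ZMod (2*n+2))) =
      (Oset n i).erase (i + ((2*r+1 : ℕ) : ZMod (2*n+2))) := by
  have : i + ((2*m+1 : ℕ) : ZMod (2*n+2)) = i + ((2*r+3 : ℕ) : ZMod (2*n+2)) :=
    (e_eq (by omega) (by omega)).mpr (by omega)
  rw [this, LT i (by omega)]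

lemma card_Sfin (hn : 2 ≤ n) (i : ZMod (2*n+2)) : (Sfin n i).card = n + 1 := by
  rw [Sfin, Finset.card_image_of_injOn, Finset.card_range]
  intro m hm m' hm' h
  simp only [Finset.coe_range, Set.mem_Iio] at hm hm'
  have hr1 : ∃ r, r < n+1 ∧ (2*m+1 = 2*r+3 ∨ 2*m+1 + (2*n+2) = 2*r+3) := by
    rcases Nat.eq_zero_or_pos m with rfl | hp
    · exact ⟨n, by omega, by omega⟩
    · exact ⟨m-1, by omega, by omega⟩
  have hr2 : ∃ r, r < n+1 ∧ (2*m'+1 = 2*r+3 ∨ 2*m'+1 + (2*n+2) = 2*r+3) := by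
    rcases Nat.eq_zero_or_pos m' with rfl | hp
    · exact ⟨n, by omega, by omega⟩
    · exact ⟨m'-1, by omega, by omega⟩
  obtain ⟨r1, hhr1, hd1⟩ := hr1
  obtain ⟨r2, hhr2, hd2⟩ := hr2
  have h' : Tf n (i + ((2*m+1 : ℕ) : ZMod (2*n+2))) = Tf n (i + ((2*m'+1 : ℕ) : ZMod (2*n+2))) := h
  rw [key_erase hn i hm hhr1 hd1, key_erase hn i hm' hhr2 hd2] at h'
  have hx := erase_inj (mem_O.mpr ⟨r1, by omega, rfl⟩) h' 
  rw [e_eq (by omega) (by omega)] at hx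
  omega

end TNA

/-- For `n ≥ 2`, a tight stable n-set `α` has exactly `n + 2` neighbors in
`SG_{n,2}`: the `n + 1` tight stable n-sets of opposite parity, together with
exactly one further neighbor, which is loose (the unique outer neighbor). -/
theorem tight_neighbors (n : ℕ) (hn : 2 ≤ n)
    (α : Finset (ZMod (2 * n + 2))) (hα : IsStable n α) (hαt : IsTight n α) :
    ∃ η : Finset (ZMod (2 * n + 2)),
      IsStable n η ∧ ¬ IsTight n η ∧ OuterNbr n α η ∧
      {β | IsStable n β ∧ Disjoint α β} =
        insert η {β | IsStable n β ∧ IsTight n β ∧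
          ∀ b ∈ β, ∀ a ∈ α, parity n b ≠ parity n a} ∧
      {β : Finset (ZMod (2 * n + 2)) | IsStable n β ∧ IsTight n β ∧
          ∀ b ∈ β, ∀ a ∈ α, parity n b ≠ parity n a}.ncard = n + 1 ∧
      {β : Finset (ZMod (2 * n + 2)) | IsStable n β ∧ Disjoint α β}.ncard = n + 2 := by
  obtain ⟨i, hi⟩ := hαt
  have hi' : α = TNA.Tf n i := hi
  rw [hi']
  have hnotmem : TNA.eta n i ∉ (TNA.Sfin n i : Set (Finset (ZMod (2*n+2)))) := by
    rw [← TNA.S_eq hn i]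
    intro hmem
    exact TNA.not_tight_eta hn hmem.2.1
  refine ⟨TNA.eta n i, TNA.stable_eta hn, TNA.not_tight_eta hn, TNA.outer_eta hn,
    TNA.main_eq hn i, ?_, ?_⟩
  · rw [TNA.S_eq hn i, Set.ncard_coe_finset, TNA.card_Sfin hn i]
  · rw [TNA.main_eq hn i, TNA.S_eq hn i, ← Finset.coe_insert, Set.ncard_coe_finset,
      Finset.card_insert_of_notMem (by simpa using hnotmem), TNA.card_Sfin hn i]
end

section
/- Let n ≥ 1. A stable n-set α ⊆ ZMod (2n+2) is tight if and only if all elements of α have the same parity; equivalently, the tight stable n-sets with all elements odd are precisely the n-element subsets of the set of n + 1 odd elements of ZMod (2n+2), and likewise for even. -/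
lemma parity_add (n : ℕ) (a b : ZMod (2*n+2)) : parity n (a+b) = parity n a + parity n b :=
  map_add _ a b

lemma parity_two_mul (n : ℕ) (a : ZMod (2*n+2)) : parity n (2*a) = 0 := by
  unfold parity
  rw [map_mul]
  have : (ZMod.castHom (show (2 : ℕ) ∣ 2 * n + 2 from ⟨n + 1, by ring⟩) (ZMod 2)) (2 : ZMod (2*n+2)) = 0 := by
    rw [show (2 : ZMod (2*n+2)) = 1 + 1 by ring, map_add, map_one]
    decide
  rw [this, zero_mul]

lemma parity_one (n : ℕ) : parity n 1 = 1 := map_one _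
lemma parity_zero (n : ℕ) : parity n 0 = 0 := map_zero _

lemma cast2 (n a b : ℕ) (h : a % (n+1) = b % (n+1)) :
    (2 * (a : ZMod (2*n+2))) = 2 * (b : ZMod (2*n+2)) := by
  have h' : (2*a) ≡ 2*b [MOD 2*(n+1)] := Nat.ModEq.mul_left' 2 h
  rw [show 2*(n+1) = 2*n+2 by ring] at h'
  have h'' : ((2*a : ℕ) : ZMod (2*n+2)) = ((2*b : ℕ) : ZMod (2*n+2)) := by
    rwa [ZMod.natCast_eq_natCast_iff]
  push_cast at h''; exact h''

lemma cast2_inj (n a b : ℕ) (ha : a < n+1) (hb : b < n+1)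
    (h : 2 * (a : ZMod (2*n+2)) = 2 * (b : ZMod (2*n+2))) : a = b := by
  have h' : ((2*a : ℕ) : ZMod (2*n+2)) = ((2*b:ℕ) : ZMod (2*n+2)) := by push_cast; exact h
  rw [ZMod.natCast_eq_natCast_iff] at h'
  have := h'.eq_of_lt_of_lt (by omega) (by omega)
  omega

def classSet (n : ℕ) (p₀ : ZMod (2*n+2)) : Finset (ZMod (2*n+2)) :=
  (Finset.range (n+1)).image (fun k : ℕ => p₀ + 2 * (k : ZMod (2*n+2)))

lemma classSet_card (n : ℕ) (p₀ : ZMod (2*n+2)) : (classSet n p₀).card = n + 1 := by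
  rw [classSet, Finset.card_image_of_injOn, Finset.card_range]
  intro a ha b hb hab
  simp only [Finset.coe_range, Set.mem_Iio] at ha hb
  exact cast2_inj n a b ha hb (by simpa using hab)

lemma parity_classSet (n : ℕ) (p₀ : ZMod (2*n+2)) (a : ZMod (2*n+2))
    (h : a ∈ classSet n p₀) : parity n a = parity n p₀ := by
  simp only [classSet, Finset.mem_image] at h
  obtain ⟨k, -, rfl⟩ := h
  rw [parity_add, parity_two_mul, add_zero]

lemma filter_parity (n : ℕ) :
    ((Finset.univ.filter fun a : ZMod (2*n+2) => parity n a = 0) = classSet n 0 ∧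
     (Finset.univ.filter fun a : ZMod (2*n+2) => parity n a = 1) = classSet n 1) := by
  have hsub0 : classSet n 0 ⊆ Finset.univ.filter fun a : ZMod (2*n+2) => parity n a = 0 := by
    intro a ha
    simp only [Finset.mem_filter, Finset.mem_univ, true_and]
    rw [parity_classSet n 0 a ha, parity_zero]
  have hsub1 : classSet n 1 ⊆ Finset.univ.filter fun a : ZMod (2*n+2) => parity n a = 1 := by
    intro a ha
    simp only [Finset.mem_filter, Finset.mem_univ, true_and]
    rw [parity_classSet n 1 a ha, parity_one]
  have hcardsum : (Finset.univ.filter fun a : ZMod (2*n+2) => parity n a = 0).card +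
      (Finset.univ.filter fun a : ZMod (2*n+2) => parity n a = 1).card = 2*n+2 := by
    have h1 : (Finset.univ.filter fun a : ZMod (2*n+2) => parity n a = 1) =
        (Finset.univ.filter fun a : ZMod (2*n+2) => ¬ parity n a = 0) := by
      apply Finset.filter_congr
      intro a _
      have h2 : ∀ p : ZMod 2, (p = 1 ↔ ¬ p = 0) := by decide
      exact h2 (parity n a)
    rw [h1, Finset.card_filter_add_card_filter_not]
    · simp [ZMod.card]
  have hc0 := Finset.card_le_card hsub0
  have hc1 := Finset.card_le_card hsub1
  have hcc0 := classSet_card n 0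
  have hcc1 := classSet_card n 1
  constructor
  · exact (Finset.eq_of_subset_of_card_le hsub0 (by omega)).symm
  · exact (Finset.eq_of_subset_of_card_le hsub1 (by omega)).symm

lemma erase_classSet (n : ℕ) (p₀ : ZMod (2*n+2)) (j : ℕ) (hj : j < n+1) :
    (classSet n p₀).erase (p₀ + 2*((j:ℕ):ZMod (2*n+2))) =
    (Finset.range n).image (fun k : ℕ => (p₀ + 2*((j+1:ℕ):ZMod (2*n+2))) + 2 * (k : ZMod (2*n+2))) := by
  ext x
  simp only [Finset.mem_erase, classSet, Finset.mem_image, Finset.mem_range]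
  constructor
  · rintro ⟨hne, k, hk, rfl⟩
    have hkj : k ≠ j := fun h => hne (by rw [h])
    have hex : ∃ l, l < n ∧ ((j+1)+l) % (n+1) = k % (n+1) := by
      by_cases hc : j < k
      · exact ⟨k-j-1, by omega, by rw [show (j+1)+(k-j-1) = k by omega]⟩
      · exact ⟨k+n-j, by omega,
          by rw [show (j+1)+(k+n-j) = k+(n+1) by omega, Nat.add_mod_right]⟩
    obtain ⟨l, hl, hmod⟩ := hex
    refine ⟨l, hl, ?_⟩
    have h2 := cast2 n ((j+1)+l) k hmod
    push_cast at h2 ⊢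
    linear_combination h2
  · rintro ⟨l, hl, rfl⟩
    have hex : ∃ k, k < n+1 ∧ k ≠ j ∧ ((j+1)+l) % (n+1) = k % (n+1) := by
      by_cases hc : j+1+l < n+1
      · exact ⟨j+1+l, hc, by omega, rfl⟩
      · exact ⟨j+l-n, by omega, by omega,
          by rw [show (j+1)+l = (j+l-n)+(n+1) by omega, Nat.add_mod_right]⟩
    obtain ⟨k, hk, hkj, hmod⟩ := hex
    have h2 := cast2 n ((j+1)+l) k hmod
    refine ⟨?_, k, hk, ?_⟩
    · intro hx
      have h3 : (2:ZMod (2*n+2))*((k:ℕ):ZMod (2*n+2)) = 2*((j:ℕ):ZMod (2*n+2)) := by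
        push_cast at hx h2 ⊢
        linear_combination -h2 + hx
      exact hkj (cast2_inj n k j hk hj h3)
    · push_cast at h2 ⊢
      linear_combination -h2

lemma tight_of_subset (n : ℕ) (p₀ : ZMod (2*n+2)) (α : Finset (ZMod (2*n+2)))
    (hsub : α ⊆ classSet n p₀) (hcard : α.card = n) : IsTight n α := by
  have h1 : (classSet n p₀ \ α).card = 1 := by
    rw [Finset.card_sdiff_of_subset hsub, classSet_card, hcard]; omega
  obtain ⟨m, hm⟩ := Finset.card_eq_one.mp h1
  have hmem : m ∈ classSet n p₀ ∧ m ∉ α := by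
    have := hm ▸ Finset.mem_singleton_self m
    simpa [Finset.mem_sdiff] using this
  have hα : α = (classSet n p₀).erase m := by
    apply Finset.eq_of_subset_of_card_le
    · intro a ha; exact Finset.mem_erase.mpr ⟨fun h => hmem.2 (h ▸ ha), hsub ha⟩
    · rw [Finset.card_erase_of_mem hmem.1, classSet_card, hcard]; omega
  obtain ⟨j, hj, hjm⟩ := by
    simpa only [classSet, Finset.mem_image, Finset.mem_range] using hmem.1
  refine ⟨p₀ + 2*((j+1:ℕ):ZMod (2*n+2)), ?_⟩
  rw [hα, ← hjm, erase_classSet n p₀ j hj]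

lemma tight_parity (n : ℕ) (α : Finset (ZMod (2*n+2))) (h : IsTight n α) :
    ∃ p : ZMod 2, ∀ a ∈ α, parity n a = p := by
  obtain ⟨i, rfl⟩ := h
  refine ⟨parity n i, fun a ha => ?_⟩
  obtain ⟨k, -, rfl⟩ := Finset.mem_image.mp ha
  rw [parity_add, parity_two_mul, add_zero]

lemma stable_of_same_parity (n : ℕ) (α : Finset (ZMod (2*n+2))) (hcard : α.card = n)
    (p : ZMod 2) (hp : ∀ a ∈ α, parity n a = p) : IsStable n α := by
  refine ⟨hcard, fun i hi => ?_⟩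
  have e1 := hp i hi.1
  have e2 := hp _ hi.2
  rw [parity_add, parity_one, e1] at e2
  have hq : ∀ q : ZMod 2, q + 1 ≠ q := by decide
  exact hq p e2

lemma zmod2_cases : ∀ q : ZMod 2, q = 0 ∨ q = 1 := by decide


/-- A stable n-set is tight iff all its elements have the same parity;
equivalently, the all-odd (resp. all-even) tight stable n-sets are exactly the
n-element subsets of the set of `n + 1` odd (resp. even) elements. -/
theorem tight_iff_same_parity (n : ℕ) (hn : 1 ≤ n) :
    (∀ α : Finset (ZMod (2 * n + 2)), IsStable n α →
      (IsTight n α ↔ ∃ p : ZMod 2, ∀ a ∈ α, parity n a = p)) ∧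
    (Finset.univ.filter fun a : ZMod (2 * n + 2) => parity n a = 1).card = n + 1 ∧
    (Finset.univ.filter fun a : ZMod (2 * n + 2) => parity n a = 0).card = n + 1 ∧
    (∀ α : Finset (ZMod (2 * n + 2)),
      (IsStable n α ∧ IsTight n α ∧ ∀ a ∈ α, parity n a = 1) ↔
      (α.card = n ∧ α ⊆ Finset.univ.filter fun a => parity n a = 1)) ∧
    (∀ α : Finset (ZMod (2 * n + 2)),
      (IsStable n α ∧ IsTight n α ∧ ∀ a ∈ α, parity n a = 0) ↔
      (α.card = n ∧ α ⊆ Finset.univ.filter fun a => parity n a = 0)) := by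
  obtain ⟨hf0, hf1⟩ := filter_parity n
  have key : ∀ (p₀ : ZMod (2*n+2)) (α : Finset (ZMod (2*n+2))),
      (α.card = n ∧ α ⊆ classSet n p₀) →
      IsStable n α ∧ IsTight n α ∧ ∀ a ∈ α, parity n a = parity n p₀ := by
    rintro p₀ α ⟨hc, hs⟩
    have hpar : ∀ a ∈ α, parity n a = parity n p₀ := fun a ha =>
      parity_classSet n p₀ a (hs ha)
    exact ⟨stable_of_same_parity n α hc _ hpar, tight_of_subset n p₀ α hs hc, hpar⟩
  refine ⟨?_, ?_, ?_, ?_, ?_⟩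
  · intro α hα
    constructor
    · exact tight_parity n α
    · rintro ⟨p, hp⟩
      rcases zmod2_cases p with rfl | rfl
      · refine tight_of_subset n 0 α ?_ hα.1
        rw [← hf0]
        intro a ha
        simp only [Finset.mem_filter, Finset.mem_univ, true_and]
        exact hp a ha
      · refine tight_of_subset n 1 α ?_ hα.1
        rw [← hf1]
        intro a ha
        simp only [Finset.mem_filter, Finset.mem_univ, true_and]
        exact hp a ha
  · rw [hf1, classSet_card]
  · rw [hf0, classSet_card]
  · intro α
    constructor
    · rintro ⟨hst, -, hp⟩
      refine ⟨hst.1, fun a ha => ?_⟩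
      simp only [Finset.mem_filter, Finset.mem_univ, true_and]
      exact hp a ha
    · rintro ⟨hc, hs⟩
      have := key 1 α ⟨hc, by rwa [← hf1]⟩
      rwa [parity_one] at this
  · intro α
    constructor
    · rintro ⟨hst, -, hp⟩
      refine ⟨hst.1, fun a ha => ?_⟩
      simp only [Finset.mem_filter, Finset.mem_univ, true_and]
      exact hp a ha
    · rintro ⟨hc, hs⟩
      have := key 0 α ⟨hc, by rwa [← hf0]⟩
      rwa [parity_zero] at this
end

section
/- Let n ≥ 1 and 0 ≤ i ≤ n. Let α⁰ be the subset of ZMod (2n+2) consisting of the n − i odd elements 1, 3, …, 2(n−i)−1 together with the i even elements 2(n−i)+2, 2(n−i)+4, …, 2n. Then P_i = {α⁰ ⊖ 2j : 0 ≤ j ≤ n}, the n + 1 sets α⁰ ⊖ 2j for 0 ≤ j ≤ n are pairwise distinct, and consequently |P_i| = n + 1. -/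
/-! Auxiliary lemmas -/

/-- The val-level membership predicate for `α0`. -/
def Qpred (n i v : ℕ) : Prop :=
  (v % 2 = 1 ∧ v < 2 * (n - i)) ∨ (v % 2 = 0 ∧ 2 * (n - i) + 2 ≤ v ∧ v ≤ 2 * n)

lemma aux_par_val (n : ℕ) (a : ZMod (2 * n + 2)) :
    parity n a = ((a.val : ℕ) : ZMod 2) := by
  rw [parity, ZMod.castHom_apply]; rfl

lemma aux_nat_zmod2_zero (v : ℕ) : ((v : ℕ) : ZMod 2) = 0 ↔ v % 2 = 0 := by
  rw [ZMod.natCast_eq_zero_iff]; omega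

lemma aux_nat_zmod2_one (v : ℕ) : ((v : ℕ) : ZMod 2) = 1 ↔ v % 2 = 1 := by
  conv_lhs => rw [show (1 : ZMod 2) = ((1 : ℕ) : ZMod 2) by norm_num]
  rw [ZMod.natCast_eq_natCast_iff, Nat.ModEq]

lemma aux_par0 (n : ℕ) (a : ZMod (2 * n + 2)) : parity n a = 0 ↔ a.val % 2 = 0 := by
  rw [aux_par_val, aux_nat_zmod2_zero]

lemma aux_par1 (n : ℕ) (a : ZMod (2 * n + 2)) : parity n a = 1 ↔ a.val % 2 = 1 := by
  rw [aux_par_val, aux_nat_zmod2_one]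

lemma aux_cast_val (n : ℕ) (a : ZMod (2 * n + 2)) : ((a.val : ℕ) : ZMod (2 * n + 2)) = a := by
  simp [ZMod.natCast_val, ZMod.cast_id]

lemma aux_val_eq_iff (n v : ℕ) (hv : v < 2 * n + 2) (a : ZMod (2 * n + 2)) :
    a.val = v ↔ a = ((v : ℕ) : ZMod (2 * n + 2)) := by
  constructor
  · intro h; rw [← aux_cast_val n a, h]
  · intro h; rw [h, ZMod.val_cast_of_lt hv]

lemma aux_mem_alpha0 (n i : ℕ) (hi : i ≤ n) (α0 : Finset (ZMod (2 * n + 2)))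
    (hα0 : α0 = ((Finset.range (n - i)).image
        (fun k => ((2 * k + 1 : ℕ) : ZMod (2 * n + 2)))) ∪
      ((Finset.range i).image
        (fun k => ((2 * (n - i) + 2 * k + 2 : ℕ) : ZMod (2 * n + 2))))) :
    ∀ a : ZMod (2 * n + 2), a ∈ α0 ↔ Qpred n i a.val := by
  intro a
  rw [hα0, Finset.mem_union, Finset.mem_image, Finset.mem_image]
  simp only [Finset.mem_range]
  constructor
  · rintro (⟨k, hk, rfl⟩ | ⟨k, hk, rfl⟩)
    · rw [ZMod.val_cast_of_lt (by omega)]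
      left; omega
    · rw [ZMod.val_cast_of_lt (by omega)]
      right; omega
  · rintro (⟨h1, h2⟩ | ⟨h1, h2, h3⟩)
    · left
      refine ⟨a.val / 2, by omega, ?_⟩
      rw [eq_comm, ← aux_val_eq_iff n _ (by omega)]; omega
    · right
      refine ⟨(a.val - 2 * (n - i) - 2) / 2, by omega, ?_⟩
      rw [eq_comm, ← aux_val_eq_iff n _ (by omega)]; omega

lemma aux_mem_ominus (n : ℕ) (α : Finset (ZMod (2 * n + 2))) (j x : ZMod (2 * n + 2)) :
    x ∈ ominus n α j ↔ x + j ∈ α := by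
  rw [ominus, Finset.mem_image]
  constructor
  · rintro ⟨a, ha, rfl⟩; simpa using ha
  · intro h; exact ⟨x + j, h, by ring⟩

lemma aux_card_ominus (n : ℕ) (α : Finset (ZMod (2 * n + 2))) (j : ZMod (2 * n + 2)) :
    (ominus n α j).card = α.card :=
  Finset.card_image_of_injective _ (sub_left_injective)

lemma aux_stable_ominus (n : ℕ) (α : Finset (ZMod (2 * n + 2))) (j : ZMod (2 * n + 2))
    (h : IsStable n α) : IsStable n (ominus n α j) := by
  refine ⟨by rw [aux_card_ominus, h.1], ?_⟩
  intro x hx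
  rw [aux_mem_ominus, aux_mem_ominus] at hx
  exact h.2 (x + j) ⟨hx.1, by have h2 := hx.2; rw [add_right_comm] at h2; exact h2⟩

lemma aux_parity_sub (n : ℕ) (a j : ZMod (2 * n + 2)) :
    parity n (a - j) = parity n a - parity n j := by
  simp [parity, map_sub]

lemma aux_filter_ominus (n : ℕ) (α : Finset (ZMod (2 * n + 2))) (j : ZMod (2 * n + 2))
    (hj : parity n j = 0) (c : ZMod 2) :
    ((ominus n α j).filter fun a => parity n a = c) =
      ominus n (α.filter fun a => parity n a = c) j := by
  ext x
  rw [Finset.mem_filter, aux_mem_ominus, aux_mem_ominus, Finset.mem_filter]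
  have : parity n x = parity n (x + j) := by
    have := aux_parity_sub n (x + j) j
    simp only [add_sub_cancel_right] at this
    rw [this, hj, sub_zero]
  rw [this]

lemma aux_Pset_ominus (n i : ℕ) (α : Finset (ZMod (2 * n + 2))) (j : ZMod (2 * n + 2))
    (hj : parity n j = 0) (h : α ∈ Pset n i) : ominus n α j ∈ Pset n i := by
  obtain ⟨hst, h0, h1⟩ := h
  refine ⟨aux_stable_ominus n α j hst, ?_, ?_⟩
  · rw [aux_filter_ominus n α j hj, aux_card_ominus]; exact h0
  · rw [aux_filter_ominus n α j hj, aux_card_ominus]; exact h1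

lemma aux_mem_F1 (n i : ℕ) (hi : i ≤ n) (a : ZMod (2 * n + 2)) :
    a ∈ (Finset.range (n - i)).image (fun k => ((2 * k + 1 : ℕ) : ZMod (2 * n + 2))) ↔
      (a.val % 2 = 1 ∧ a.val < 2 * (n - i)) := by
  rw [Finset.mem_image]
  simp only [Finset.mem_range]
  constructor
  · rintro ⟨k, hk, rfl⟩
    rw [ZMod.val_cast_of_lt (by omega)]; omega
  · rintro ⟨h1, h2⟩
    refine ⟨a.val / 2, by omega, ?_⟩
    rw [eq_comm, ← aux_val_eq_iff n _ (by omega)]; omega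

lemma aux_mem_F2 (n i : ℕ) (hi : i ≤ n) (a : ZMod (2 * n + 2)) :
    a ∈ (Finset.range i).image (fun k => ((2 * (n - i) + 2 * k + 2 : ℕ) : ZMod (2 * n + 2))) ↔
      (a.val % 2 = 0 ∧ 2 * (n - i) + 2 ≤ a.val ∧ a.val ≤ 2 * n) := by
  rw [Finset.mem_image]
  simp only [Finset.mem_range]
  constructor
  · rintro ⟨k, hk, rfl⟩
    rw [ZMod.val_cast_of_lt (by omega)]; omega
  · rintro ⟨h1, h2, h3⟩
    refine ⟨(a.val - 2 * (n - i) - 2) / 2, by omega, ?_⟩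
    rw [eq_comm, ← aux_val_eq_iff n _ (by omega)]; omega

lemma aux_val_add_one (n : ℕ) (x : ZMod (2 * n + 2)) (hx : x.val ≤ 2 * n) :
    (x + 1).val = x.val + 1 := by
  have h1 : (1 : ZMod (2 * n + 2)).val = 1 := by
    rw [ZMod.val_one_eq_one_mod]; exact Nat.mod_eq_of_lt (by omega)
  rw [ZMod.val_add, h1, Nat.mod_eq_of_lt (by omega)]

lemma aux_alpha0_Pset (n i : ℕ) (hn : 1 ≤ n) (hi : i ≤ n) (α0 : Finset (ZMod (2 * n + 2)))
    (hα0 : α0 = ((Finset.range (n - i)).image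
        (fun k => ((2 * k + 1 : ℕ) : ZMod (2 * n + 2)))) ∪
      ((Finset.range i).image
        (fun k => ((2 * (n - i) + 2 * k + 2 : ℕ) : ZMod (2 * n + 2))))) :
    α0 ∈ Pset n i := by
  have hmem := aux_mem_alpha0 n i hi α0 hα0
  have hF1 : (α0.filter fun a => parity n a = 1) = (Finset.range (n - i)).image
      (fun k => ((2 * k + 1 : ℕ) : ZMod (2 * n + 2))) := by
    ext a
    rw [Finset.mem_filter, hmem a, aux_mem_F1 n i hi, aux_par1]
    unfold Qpred; constructor
    · rintro ⟨h, h2⟩; omega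
    · rintro ⟨h1, h2⟩; exact ⟨Or.inl ⟨h1, h2⟩, h1⟩
  have hF2 : (α0.filter fun a => parity n a = 0) = (Finset.range i).image
      (fun k => ((2 * (n - i) + 2 * k + 2 : ℕ) : ZMod (2 * n + 2))) := by
    ext a
    rw [Finset.mem_filter, hmem a, aux_mem_F2 n i hi, aux_par0]
    unfold Qpred; constructor
    · rintro ⟨h, h2⟩; omega
    · rintro ⟨h1, h2, h3⟩; exact ⟨Or.inr ⟨h1, h2, h3⟩, h1⟩
  have hcF1 : ((Finset.range (n - i)).image
      (fun k => ((2 * k + 1 : ℕ) : ZMod (2 * n + 2)))).card = n - i := by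
    rw [Finset.card_image_of_injOn, Finset.card_range]
    intro x hx y hy hxy
    simp only [Finset.coe_range, Set.mem_Iio] at hx hy
    have := congrArg ZMod.val hxy
    rw [ZMod.val_cast_of_lt (by omega), ZMod.val_cast_of_lt (by omega)] at this
    omega
  have hcF2 : ((Finset.range i).image
      (fun k => ((2 * (n - i) + 2 * k + 2 : ℕ) : ZMod (2 * n + 2)))).card = i := by
    rw [Finset.card_image_of_injOn, Finset.card_range]
    intro x hx y hy hxy
    simp only [Finset.coe_range, Set.mem_Iio] at hx hy
    have := congrArg ZMod.val hxy
    rw [ZMod.val_cast_of_lt (by omega), ZMod.val_cast_of_lt (by omega)] at this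
    omega
  have hcard : α0.card = n := by
    rw [hα0, Finset.card_union_of_disjoint, hcF1, hcF2]
    · omega
    · rw [Finset.disjoint_left]
      intro a ha hb
      rw [aux_mem_F1 n i hi] at ha
      rw [aux_mem_F2 n i hi] at hb
      omega
  refine ⟨⟨hcard, ?_⟩, by rw [hF2, hcF2], by rw [hF1, hcF1]⟩
  intro x ⟨hx1, hx2⟩
  rw [hmem] at hx1 hx2
  have hle : x.val ≤ 2 * n := by unfold Qpred at hx1; omega
  rw [aux_val_add_one n x hle] at hx2
  unfold Qpred at hx1 hx2; omega

lemma aux_unique (n i : ℕ) (hi : i ≤ n) (α : Finset (ZMod (2 * n + 2)))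
    (hst : IsStable n α)
    (hodd : (α.filter fun a => parity n a = 1).card = n - i)
    (h0 : (0 : ZMod (2 * n + 2)) ∉ α) (hm1 : (-1 : ZMod (2 * n + 2)) ∉ α) :
    ∀ a : ZMod (2 * n + 2), a ∈ α ↔ Qpred n i a.val := by
  classical
  set S : Finset ℕ := α.image ZMod.val with hS
  have hSmem : ∀ v : ℕ, v ∈ S ↔ (v < 2 * n + 2 ∧ ((v : ℕ) : ZMod (2 * n + 2)) ∈ α) := by
    intro v
    rw [hS, Finset.mem_image]
    constructor
    · rintro ⟨a, ha, rfl⟩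
      exact ⟨ZMod.val_lt a, by rw [aux_cast_val]; exact ha⟩
    · rintro ⟨hv, hmem⟩
      exact ⟨((v : ℕ) : ZMod (2 * n + 2)), hmem, ZMod.val_cast_of_lt hv⟩
  have hcardS : S.card = n := by
    rw [hS, Finset.card_image_of_injective _ (ZMod.val_injective _), hst.1]
  have hneg : ((2 * n + 1 : ℕ) : ZMod (2 * n + 2)) = -1 := by
    have h := ZMod.natCast_self (2 * n + 2)
    push_cast at h ⊢
    linear_combination h
  have hrange : ∀ v ∈ S, 1 ≤ v ∧ v ≤ 2 * n := by
    intro v hv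
    rw [hSmem] at hv
    constructor
    · rcases Nat.eq_zero_or_pos v with h | h
      · exfalso; apply h0; rw [← Nat.cast_zero (R := ZMod (2 * n + 2)), ← h]; exact hv.2
      · exact h
    · by_contra hgt
      push_neg at hgt
      have : v = 2 * n + 1 := by omega
      apply hm1
      rw [← hneg, ← this]
      exact hv.2
  have hnocons : ∀ v, v ∈ S → (v + 1) ∉ S := by
    intro v hv hv1
    rw [hSmem] at hv hv1
    have hcast : ((v + 1 : ℕ) : ZMod (2 * n + 2)) = ((v : ℕ) : ZMod (2 * n + 2)) + 1 := by
      push_cast; ring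
    exact hst.2 ((v : ℕ) : ZMod (2 * n + 2)) ⟨hv.2, hcast ▸ hv1.2⟩
  set P : ℕ → Finset ℕ := fun m => {2 * m + 1, 2 * m + 2} with hP
  have hPmem : ∀ m v, v ∈ P m ↔ (v = 2 * m + 1 ∨ v = 2 * m + 2) := by
    intro m v; simp [hP]
  have hbiU : S = (Finset.range n).biUnion (fun m => S ∩ P m) := by
    ext v
    simp only [Finset.mem_biUnion, Finset.mem_range, Finset.mem_inter]
    constructor
    · intro hv
      have hr := hrange v hv
      exact ⟨(v - 1) / 2, by omega, hv, by rw [hPmem]; omega⟩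
    · rintro ⟨m, _, hv, _⟩; exact hv
  have hsum : ∑ m ∈ Finset.range n, (S ∩ P m).card = n := by
    rw [← Finset.card_biUnion, ← hbiU, hcardS]
    intro x _ y _ hxy
    simp only [Function.onFun]
    rw [Finset.disjoint_left]
    intro a ha hb
    rw [Finset.mem_inter, hPmem] at ha hb
    omega
  have hle1 : ∀ m, (S ∩ P m).card ≤ 1 := by
    intro m
    rw [Finset.card_le_one]
    intro a ha b hb
    rw [Finset.mem_inter, hPmem] at ha hb
    rcases ha.2 with h1 | h1 <;> rcases hb.2 with h2 | h2
    · omega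
    · exfalso; apply hnocons (2 * m + 1) (h1 ▸ ha.1); rw [show 2 * m + 1 + 1 = 2 * m + 2 by omega, ← h2]; exact hb.1
    · exfalso; apply hnocons (2 * m + 1) (h2 ▸ hb.1); rw [show 2 * m + 1 + 1 = 2 * m + 2 by omega, ← h1]; exact ha.1
    · omega
  have hone : ∀ m, m < n → (S ∩ P m).card = 1 := by
    by_contra h
    push_neg at h
    obtain ⟨m₀, hm₀, hne⟩ := h
    have hlt : (S ∩ P m₀).card < 1 := lt_of_le_of_ne (hle1 m₀) hne
    have := Finset.sum_lt_sum (f := fun m => (S ∩ P m).card) (g := fun _ => 1)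
      (fun m _ => hle1 m) ⟨m₀, Finset.mem_range.2 hm₀, hlt⟩
    rw [hsum, Finset.sum_const, smul_eq_mul, mul_one, Finset.card_range] at this
    omega
  have hexact : ∀ m, m < n → ((2 * m + 1 ∈ S ∧ 2 * m + 2 ∉ S) ∨ (2 * m + 1 ∉ S ∧ 2 * m + 2 ∈ S)) := by
    intro m hm
    obtain ⟨x, hx⟩ := Finset.card_eq_one.1 (hone m hm)
    have hxm : x ∈ S ∩ P m := hx ▸ Finset.mem_singleton_self x
    rw [Finset.mem_inter, hPmem] at hxm
    have honly : ∀ v, v ∈ S ∩ P m → v = x := by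
      intro v hv; rw [hx, Finset.mem_singleton] at hv; exact hv
    rcases hxm.2 with h1 | h1
    · left
      refine ⟨h1 ▸ hxm.1, fun h2 => ?_⟩
      have := honly (2 * m + 2) (Finset.mem_inter.2 ⟨h2, by rw [hPmem]; omega⟩)
      omega
    · right
      refine ⟨fun h2 => ?_, h1 ▸ hxm.1⟩
      have := honly (2 * m + 1) (Finset.mem_inter.2 ⟨h2, by rw [hPmem]; omega⟩)
      omega
  set D : Finset ℕ := (Finset.range n).filter (fun m => 2 * m + 1 ∈ S) with hD
  have hDmem : ∀ m, m ∈ D ↔ (m < n ∧ 2 * m + 1 ∈ S) := by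
    intro m; rw [hD, Finset.mem_filter, Finset.mem_range]
  have hDstep : ∀ m, m + 1 ∈ D → m ∈ D := by
    intro m hm
    rw [hDmem] at hm ⊢
    have hmn : m < n := by omega
    refine ⟨hmn, ?_⟩
    rcases hexact m hmn with h | h
    · exact h.1
    · exfalso
      apply hnocons (2 * m + 2) h.2
      rw [show 2 * m + 2 + 1 = 2 * (m + 1) + 1 by omega]
      exact hm.2
  have hDdown : ∀ m k, m + k ∈ D → m ∈ D := by
    intro m k
    induction k with
    | zero => intro h; exact h
    | succ k ih => intro h; exact ih (hDstep (m + k) h)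
  have hDcard : D.card = n - i := by
    rw [← hodd]
    symm
    refine Finset.card_bij' (fun a _ => (a.val - 1) / 2)
      (fun m _ => ((2 * m + 1 : ℕ) : ZMod (2 * n + 2))) ?_ ?_ ?_ ?_
    case refine_1 =>
      intro a ha
      beta_reduce
      rw [Finset.mem_filter] at ha
      have hpar := (aux_par1 n a).1 ha.2
      have hvS : a.val ∈ S := Finset.mem_image_of_mem _ ha.1
      have hr := hrange a.val hvS
      rw [hDmem]
      refine ⟨by omega, ?_⟩
      rw [show 2 * ((a.val - 1) / 2) + 1 = a.val by omega]
      exact hvS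
    case refine_2 =>
      intro m hm
      rw [hDmem] at hm
      have h21 := hm.2
      rw [hSmem] at h21
      rw [Finset.mem_filter]
      refine ⟨h21.2, ?_⟩
      rw [aux_par1, ZMod.val_cast_of_lt (by omega)]
      omega
    case refine_3 =>
      intro a ha
      beta_reduce
      rw [Finset.mem_filter] at ha
      have hpar := (aux_par1 n a).1 ha.2
      have hvS : a.val ∈ S := Finset.mem_image_of_mem _ ha.1
      have hr := hrange a.val hvS
      rw [show 2 * ((a.val - 1) / 2) + 1 = a.val by omega]
      exact aux_cast_val n a
    case refine_4 =>
      intro m hm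
      beta_reduce
      rw [hDmem] at hm
      rw [ZMod.val_cast_of_lt (by omega)]
      omega
  have hDeq : ∀ m, m ∈ D ↔ m < n - i := by
    intro m
    constructor
    · intro hm
      by_contra hge
      push_neg at hge
      have hsub : Finset.range (m + 1) ⊆ D := by
        intro k hk
        rw [Finset.mem_range] at hk
        have : k + (m - k) = m := by omega
        exact hDdown k (m - k) (by rwa [this])
      have := Finset.card_le_card hsub
      rw [Finset.card_range, hDcard] at this
      omega
    · intro hm
      by_contra hnm
      have hsub : D ⊆ Finset.range m := by
        intro k hk
        rw [Finset.mem_range]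
        by_contra hge
        push_neg at hge
        apply hnm
        apply hDdown m (k - m)
        rwa [show m + (k - m) = k by omega]
      have := Finset.card_le_card hsub
      rw [Finset.card_range, hDcard] at this
      omega
  -- final characterization
  intro a
  have hmemS : a ∈ α ↔ a.val ∈ S := by
    constructor
    · exact fun h => Finset.mem_image_of_mem _ h
    · intro h
      rw [hSmem] at h
      rw [← aux_cast_val n a]
      exact h.2
  rw [hmemS]
  constructor
  · intro hvS
    have hr := hrange a.val hvS
    rcases Nat.even_or_odd a.val with he | ho
    · -- even: a.val = 2m+2
      have hmod : a.val % 2 = 0 := Nat.even_iff.1 he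
      set m := (a.val - 2) / 2 with hm
      have hav : a.val = 2 * m + 2 := by omega
      have hmn : m < n := by omega
      have h2m2 : 2 * m + 2 ∈ S := hav ▸ hvS
      have hnot : 2 * m + 1 ∉ S := by
        rcases hexact m hmn with h | h
        · exact absurd h2m2 h.2
        · exact h.1
      have hmD : m ∉ D := fun h => hnot ((hDmem m).1 h).2
      have : ¬ m < n - i := fun h => hmD ((hDeq m).2 h)
      right; omega
    · have hmod : a.val % 2 = 1 := Nat.odd_iff.1 ho
      set m := (a.val - 1) / 2 with hm
      have hav : a.val = 2 * m + 1 := by omega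
      have hmn : m < n := by omega
      have hmD : m ∈ D := (hDmem m).2 ⟨hmn, hav ▸ hvS⟩
      have := (hDeq m).1 hmD
      left; omega
  · intro hq
    rcases hq with ⟨h1, h2⟩ | ⟨h1, h2, h3⟩
    · set m := (a.val - 1) / 2 with hm
      have hav : a.val = 2 * m + 1 := by omega
      have hmD : m ∈ D := (hDeq m).2 (by omega)
      have := ((hDmem m).1 hmD).2
      rwa [← hav] at this
    · set m := (a.val - 2) / 2 with hm
      have hav : a.val = 2 * m + 2 := by omega
      have hmn : m < n := by omega
      have hmD : m ∉ D := fun h => by have := (hDeq m).1 h; omega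
      have hnot : 2 * m + 1 ∉ S := fun h => hmD ((hDmem m).2 ⟨hmn, h⟩)
      rcases hexact m hmn with h | h
      · exact absurd h.1 hnot
      · have h2 := h.2
        rwa [← hav] at h2

lemma aux_parity_add (n : ℕ) (a b : ZMod (2 * n + 2)) :
    parity n (a + b) = parity n a + parity n b := by
  simp [parity, map_add]

lemma aux_par_one (n : ℕ) : parity n (1 : ZMod (2 * n + 2)) = 1 := by
  rw [aux_par1]
  have h1 : (1 : ZMod (2 * n + 2)).val = 1 := by
    rw [ZMod.val_one_eq_one_mod]; exact Nat.mod_eq_of_lt (by omega)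
  rw [h1]

lemma aux_exists_gap (n i : ℕ) (hi : i ≤ n) (α : Finset (ZMod (2 * n + 2)))
    (h : α ∈ Pset n i) :
    ∃ m ≤ n, ((2 * m : ℕ) : ZMod (2 * n + 2)) ∉ α ∧
      ((2 * m : ℕ) : ZMod (2 * n + 2)) - 1 ∉ α := by
  classical
  obtain ⟨hst, hc0, hc1⟩ := h
  set Ev : Finset (ZMod (2 * n + 2)) :=
    (Finset.range (n + 1)).image (fun m => ((2 * m : ℕ) : ZMod (2 * n + 2))) with hEv
  have hEvcard : Ev.card = n + 1 := by
    rw [hEv, Finset.card_image_of_injOn, Finset.card_range]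
    intro x hx y hy hxy
    simp only [Finset.coe_range, Set.mem_Iio] at hx hy
    have := congrArg ZMod.val hxy
    rw [ZMod.val_cast_of_lt (by omega), ZMod.val_cast_of_lt (by omega)] at this
    omega
  have hEvmem : ∀ a : ZMod (2 * n + 2), a ∈ Ev ↔ a.val % 2 = 0 := by
    intro a
    rw [hEv, Finset.mem_image]
    simp only [Finset.mem_range]
    constructor
    · rintro ⟨m, hm, rfl⟩
      rw [ZMod.val_cast_of_lt (by omega)]; omega
    · intro hpar
      have hlt := ZMod.val_lt a
      refine ⟨a.val / 2, by omega, ?_⟩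
      rw [eq_comm, ← aux_val_eq_iff n _ (by omega)]; omega
  set A : Finset (ZMod (2 * n + 2)) :=
    (α.filter fun a => parity n a = 0) ∪
      ((α.filter fun a => parity n a = 1)).image (fun a => a + 1) with hA
  have hAsub : A ⊆ Ev := by
    intro x hx
    rw [hA, Finset.mem_union] at hx
    rw [hEvmem]
    rcases hx with hx | hx
    · rw [Finset.mem_filter] at hx
      exact (aux_par0 n x).1 hx.2
    · rw [Finset.mem_image] at hx
      obtain ⟨b, hb, rfl⟩ := hx
      rw [Finset.mem_filter] at hb
      rw [← aux_par0, aux_parity_add, hb.2, aux_par_one]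
      decide
  have hAcard : A.card ≤ n := by
    have h1 := Finset.card_union_le (α.filter fun a => parity n a = 0)
      (((α.filter fun a => parity n a = 1)).image (fun a => a + 1))
    have h2 : (((α.filter fun a => parity n a = 1)).image (fun a => a + 1)).card ≤
        ((α.filter fun a => parity n a = 1)).card := Finset.card_image_le
    rw [hA]
    rw [hc0, hc1] at *
    omega
  have hnsub : ¬ (Ev ⊆ A) := by
    intro hsub
    have := Finset.card_le_card hsub
    omega
  obtain ⟨e, he, hne⟩ := Finset.not_subset.1 hnsub
  rw [hEv, Finset.mem_image] at he
  obtain ⟨m, hm, rfl⟩ := he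
  rw [Finset.mem_range] at hm
  refine ⟨m, by omega, ?_, ?_⟩
  · intro hmem
    apply hne
    rw [hA, Finset.mem_union]
    left
    rw [Finset.mem_filter]
    refine ⟨hmem, ?_⟩
    rw [aux_par0, ZMod.val_cast_of_lt (by omega)]
    omega
  · intro hmem
    apply hne
    rw [hA, Finset.mem_union]
    right
    rw [Finset.mem_image]
    refine ⟨((2 * m : ℕ) : ZMod (2 * n + 2)) - 1, ?_, by ring⟩
    rw [Finset.mem_filter]
    refine ⟨hmem, ?_⟩
    have : ((2 * m : ℕ) : ZMod (2 * n + 2)) - 1 =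
        ((2 * m : ℕ) : ZMod (2 * n + 2)) + (-1) := by ring
    rw [this, aux_parity_add]
    have hp2m : parity n ((2 * m : ℕ) : ZMod (2 * n + 2)) = 0 := by
      rw [aux_par0, ZMod.val_cast_of_lt (by omega)]; omega
    have hpm1 : parity n (-1 : ZMod (2 * n + 2)) = 1 := by
      rw [show (-1 : ZMod (2 * n + 2)) = 0 - 1 by ring, aux_parity_sub, aux_par_one]
      have h0 : parity n (0 : ZMod (2 * n + 2)) = 0 := by simp [parity]
      rw [h0]; decide
    rw [hp2m, hpm1, zero_add]

lemma aux_sum_ominus (n : ℕ) (α : Finset (ZMod (2 * n + 2))) (j : ZMod (2 * n + 2)) :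
    (ominus n α j).sum id = α.sum id - α.card • j := by
  rw [ominus, Finset.sum_image (fun x _ y _ h => by
    have := sub_left_injective (G := ZMod (2 * n + 2)) (b := j) h; exact this)]
  simp only [id]
  rw [Finset.sum_sub_distrib, Finset.sum_const]

/-- `P_i` consists of the `n + 1` pairwise-distinct sets `α⁰ ⊖ 2j`, `0 ≤ j ≤ n`,
where `α⁰ = {1, 3, …, 2(n-i)-1} ∪ {2(n-i)+2, 2(n-i)+4, …, 2n}`. -/
theorem Pset_eq_shifts (n i : ℕ) (hn : 1 ≤ n) (hi : i ≤ n)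
    (α0 : Finset (ZMod (2 * n + 2)))
    (hα0 : α0 = ((Finset.range (n - i)).image
        (fun k => ((2 * k + 1 : ℕ) : ZMod (2 * n + 2)))) ∪
      ((Finset.range i).image
        (fun k => ((2 * (n - i) + 2 * k + 2 : ℕ) : ZMod (2 * n + 2))))) :
    Pset n i = {β | ∃ j ≤ n, β = ominus n α0 ((2 * j : ℕ) : ZMod (2 * n + 2))} ∧
    (∀ j₁ ≤ n, ∀ j₂ ≤ n,
      ominus n α0 ((2 * j₁ : ℕ) : ZMod (2 * n + 2)) =
        ominus n α0 ((2 * j₂ : ℕ) : ZMod (2 * n + 2)) → j₁ = j₂) ∧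
    (Pset n i).ncard = n + 1 := by
  have hmem0 := aux_mem_alpha0 n i hi α0 hα0
  have hP0 := aux_alpha0_Pset n i hn hi α0 hα0
  have hcard0 : α0.card = n := hP0.1.1
  have par2j : ∀ j : ℕ, j ≤ n → parity n ((2 * j : ℕ) : ZMod (2 * n + 2)) = 0 := by
    intro j hj
    rw [aux_par0, ZMod.val_cast_of_lt (by omega)]
    omega
  have hset : Pset n i = {β | ∃ j ≤ n, β = ominus n α0 ((2 * j : ℕ) : ZMod (2 * n + 2))} := by
    ext β
    simp only [Set.mem_setOf_eq]
    constructor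
    · intro hβ
      obtain ⟨m, hm, he1, he2⟩ := aux_exists_gap n i hi β hβ
      set e : ZMod (2 * n + 2) := ((2 * m : ℕ) : ZMod (2 * n + 2)) with hedef
      have hβ' : ominus n β e ∈ Pset n i := aux_Pset_ominus n i β e (par2j m hm) hβ
      have h0 : (0 : ZMod (2 * n + 2)) ∉ ominus n β e := by
        rw [aux_mem_ominus, zero_add]; exact he1
      have hm1 : (-1 : ZMod (2 * n + 2)) ∉ ominus n β e := by
        rw [aux_mem_ominus, show (-1 : ZMod (2 * n + 2)) + e = e - 1 by ring]; exact he2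
      have huniq := aux_unique n i hi (ominus n β e) hβ'.1 hβ'.2.2 h0 hm1
      have heqa : ominus n β e = α0 := by
        ext a
        rw [huniq a]
        exact (hmem0 a).symm
      refine ⟨if m = 0 then 0 else n + 1 - m, by split <;> omega, ?_⟩
      have hce : ((2 * (if m = 0 then 0 else n + 1 - m) : ℕ) : ZMod (2 * n + 2)) + e = 0 := by
        rw [hedef]
        split
        · next h => subst h; simp
        · next h =>
          rw [← Nat.cast_add, show 2 * (n + 1 - m) + 2 * m = 2 * n + 2 by omega,
            ZMod.natCast_self]
      ext x
      rw [aux_mem_ominus, ← heqa, aux_mem_ominus, add_assoc, hce, add_zero]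
    · rintro ⟨j, hj, rfl⟩
      exact aux_Pset_ominus n i α0 _ (par2j j hj) hP0
  have hinj : ∀ j₁ ≤ n, ∀ j₂ ≤ n,
      ominus n α0 ((2 * j₁ : ℕ) : ZMod (2 * n + 2)) =
        ominus n α0 ((2 * j₂ : ℕ) : ZMod (2 * n + 2)) → j₁ = j₂ := by
    intro j₁ hj₁ j₂ hj₂ heq
    have hs := congrArg (fun s : Finset (ZMod (2 * n + 2)) => s.sum id) heq
    rw [aux_sum_ominus, aux_sum_ominus, hcard0] at hs
    have hsm : (n : ℕ) • ((2 * j₁ : ℕ) : ZMod (2 * n + 2)) =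
        n • ((2 * j₂ : ℕ) : ZMod (2 * n + 2)) := by
      have := sub_right_injective hs
      exact this
    rw [nsmul_eq_mul, nsmul_eq_mul] at hsm
    have hcast : ((n * (2 * j₁) : ℕ) : ZMod (2 * n + 2)) = ((n * (2 * j₂) : ℕ) : ZMod (2 * n + 2)) := by
      push_cast
      push_cast at hsm
      linear_combination hsm
    rw [ZMod.natCast_eq_natCast_iff] at hcast
    have hdvd := (Nat.modEq_iff_dvd (n := 2 * n + 2)).1 hcast
    obtain ⟨c, hc⟩ := hdvd
    push_cast at hc
    have h2 : (2 : ℤ) * ((n : ℤ) * ((j₂ : ℤ) - j₁)) = 2 * (((n : ℤ) + 1) * c) := by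
      linear_combination hc
    have h3 := mul_left_cancel₀ (two_ne_zero) h2
    have hco : IsCoprime ((n : ℤ) + 1) (n : ℤ) := ⟨1, -1, by ring⟩
    have hdd : ((n : ℤ) + 1) ∣ ((j₂ : ℤ) - j₁) :=
      hco.dvd_of_dvd_mul_left ⟨c, h3.symm ▸ rfl⟩
    obtain ⟨c', hc'⟩ := hdd
    have hb1 : (j₁ : ℤ) ≤ n := by exact_mod_cast hj₁
    have hb2 : (j₂ : ℤ) ≤ n := by exact_mod_cast hj₂
    have hb3 : (0 : ℤ) ≤ j₁ := Int.natCast_nonneg _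
    have hb4 : (0 : ℤ) ≤ j₂ := Int.natCast_nonneg _
    have hc0 : c' = 0 := by
      by_contra h
      rcases lt_or_gt_of_ne h with hlt | hgt
      · have hle : c' ≤ -1 := by omega
        nlinarith
      · have hge : 1 ≤ c' := by omega
        nlinarith
    rw [hc0, mul_zero] at hc'
    omega
  refine ⟨hset, hinj, ?_⟩
  have hfin : Pset n i = ↑((Finset.range (n + 1)).image
      (fun j => ominus n α0 ((2 * j : ℕ) : ZMod (2 * n + 2)))) := by
    rw [hset]
    ext β
    simp only [Finset.coe_image, Set.mem_image, Finset.mem_coe, Finset.coe_range,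
      Set.mem_Iio, Set.mem_setOf_eq]
    constructor
    · rintro ⟨j, hj, rfl⟩
      exact ⟨j, by omega, rfl⟩
    · rintro ⟨j, hj, rfl⟩
      exact ⟨j, by omega, rfl⟩
  rw [hfin, Set.ncard_coe_finset, Finset.card_image_of_injOn, Finset.card_range]
  intro x hx y hy hxy
  simp only [Finset.coe_range, Set.mem_Iio] at hx hy
  exact hinj x (by omega) y (by omega) hxy
end

section
/- Let n ≥ 2 and 0 ≤ i ≤ n − 1, and let α ∈ P_i. Then there exists a unique π ∈ P_{i+1} such that |α ∩ π| = n − 1 and |(α ⊖ 2) ∩ π| = n − 1. -/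
namespace UUN
variable {n : ℕ}

lemma natCast_ne_zero {c : ℕ} (hc : 0 < c) (hlt : c < 2 * n + 2) :
    (c : ZMod (2 * n + 2)) ≠ 0 := by
  intro h
  rw [ZMod.natCast_eq_zero_iff] at h
  exact absurd (Nat.le_of_dvd hc h) (by omega)

lemma one_ne_zero' : (1 : ZMod (2 * n + 2)) ≠ 0 := by
  have := natCast_ne_zero (n := n) (c := 1) one_pos (by omega)
  simpa using this

lemma two_ne_zero' (hn : 2 ≤ n) : (2 : ZMod (2 * n + 2)) ≠ 0 := by
  have := natCast_ne_zero (n := n) (c := 2) (by omega) (by omega)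
  simpa using this

lemma four_ne_zero' (hn : 2 ≤ n) : (4 : ZMod (2 * n + 2)) ≠ 0 := by
  have := natCast_ne_zero (n := n) (c := 4) (by omega) (by omega)
  simpa using this

lemma parity_add_one (a : ZMod (2 * n + 2)) : parity n (a + 1) = parity n a + 1 := by
  simp [parity, map_add, map_one]

lemma parity_add_two (a : ZMod (2 * n + 2)) : parity n (a + 2) = parity n a := by
  have h2 : (2 : ZMod (2 * n + 2)) = 1 + 1 := by norm_num
  rw [show a + 2 = a + 1 + 1 by rw [h2]; ring, parity_add_one, parity_add_one]
  have : ∀ z : ZMod 2, z + 1 + 1 = z := by decide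
  exact this _

lemma parity_sub_one (a : ZMod (2 * n + 2)) : parity n (a - 1) = parity n a + 1 := by
  have := parity_add_one (n := n) (a - 1)
  rw [sub_add_cancel] at this
  rw [this]
  have : ∀ z : ZMod 2, z = z + 1 + 1 := by decide
  exact this _

lemma parity_sub_two (a : ZMod (2 * n + 2)) : parity n (a - 2) = parity n a := by
  have := parity_add_two (n := n) (a - 2)
  rwa [sub_add_cancel, eq_comm] at this

lemma mem_ominus {α : Finset (ZMod (2 * n + 2))} {x : ZMod (2 * n + 2)} :
    x ∈ ominus n α 2 ↔ x + 2 ∈ α := by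
  constructor
  · rintro h
    obtain ⟨y, hy, rfl⟩ := Finset.mem_image.mp h
    rwa [sub_add_cancel]
  · intro h
    exact Finset.mem_image.mpr ⟨x + 2, h, by rw [add_sub_cancel_right]⟩

lemma exists_top (α : Finset (ZMod (2 * n + 2))) (hcard : α.card ≤ n)
    {x₀ : ZMod (2 * n + 2)} (hx₀ : x₀ ∈ α) :
    ∃ a ∈ α, parity n a = parity n x₀ ∧ a + 2 ∉ α := by
  by_contra hcon
  push_neg at hcon
  have key : ∀ k : ℕ, x₀ + 2 * (k : ZMod (2 * n + 2)) ∈ α ∧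
      parity n (x₀ + 2 * (k : ZMod (2 * n + 2))) = parity n x₀ := by
    intro k
    induction k with
    | zero => simpa using hx₀
    | succ k ih =>
      have h2 : x₀ + 2 * ((k + 1 : ℕ) : ZMod (2 * n + 2)) =
          (x₀ + 2 * (k : ℕ)) + 2 := by push_cast; ring
      rw [h2]
      exact ⟨hcon _ ih.1 ih.2, by rw [parity_add_two]; exact ih.2⟩
  have hsub : (Finset.range (n + 1)).image
      (fun k : ℕ => x₀ + 2 * (k : ZMod (2 * n + 2))) ⊆ α := by
    intro x hx
    obtain ⟨k, _, rfl⟩ := Finset.mem_image.mp hx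
    exact (key k).1
  have hinj : Set.InjOn (fun k : ℕ => x₀ + 2 * (k : ZMod (2 * n + 2)))
      (Finset.range (n + 1)) := by
    intro k hk l hl h
    simp only [Finset.coe_range, Set.mem_Iio] at hk hl
    have h2 : ((2 * k : ℕ) : ZMod (2 * n + 2)) = ((2 * l : ℕ) : ZMod (2 * n + 2)) := by
      push_cast
      exact add_left_cancel h
    rw [ZMod.natCast_eq_natCast_iff'] at h2
    rw [Nat.mod_eq_of_lt (by omega), Nat.mod_eq_of_lt (by omega)] at h2
    omega
  have := Finset.card_le_card hsub
  rw [Finset.card_image_of_injOn hinj, Finset.card_range] at this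
  omega

lemma odds_card :
    (Finset.univ.filter (fun x : ZMod (2 * n + 2) => parity n x = 1)).card = n + 1 := by
  have hsplit := Finset.card_filter_add_card_filter_not
    (s := (Finset.univ : Finset (ZMod (2 * n + 2))))
    (p := fun x => parity n x = 0)
  have hneg : Finset.univ.filter (fun x : ZMod (2 * n + 2) => ¬ parity n x = 0) =
      Finset.univ.filter (fun x : ZMod (2 * n + 2) => parity n x = 1) := by
    apply Finset.filter_congr
    intro x _
    have : ∀ z : ZMod 2, (¬ z = 0) ↔ z = 1 := by decide
    simp [this]
  rw [hneg] at hsplit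
  have huniv : (Finset.univ : Finset (ZMod (2 * n + 2))).card = 2 * n + 2 := by
    rw [Finset.card_univ, ZMod.card]
  have hbij : (Finset.univ.filter (fun x : ZMod (2 * n + 2) => parity n x = 0)).card =
      (Finset.univ.filter (fun x : ZMod (2 * n + 2) => parity n x = 1)).card := by
    apply Finset.card_nbij' (i := fun x => x + 1) (j := fun x => x - 1)
    · intro a ha
      simp only [Finset.mem_coe, Finset.mem_filter, Finset.mem_univ, true_and] at ha ⊢
      simp [parity_add_one, ha]
    · intro a ha
      simp only [Finset.mem_coe, Finset.mem_filter, Finset.mem_univ, true_and] at ha ⊢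
      rw [parity_sub_one, ha]
      decide
    · intro a _; simp
    · intro a _; simp
  omega

lemma shift_ne {c : ℕ} (hc : 0 < c) (hlt : c < 2 * n + 2) (x : ZMod (2 * n + 2)) :
    x + (c : ZMod (2 * n + 2)) ≠ x := by
  intro h
  apply natCast_ne_zero hc hlt
  nth_rewrite 2 [← add_zero x] at h
  exact add_left_cancel h

lemma erase_inter_ominus (α : Finset (ZMod (2 * n + 2))) (r : ZMod (2 * n + 2)) :
    (α.erase r) ∩ ominus n α 2 = (α.filter (fun x => x + 2 ∈ α)).erase r := by
  ext x
  simp only [Finset.mem_inter, Finset.mem_erase, Finset.mem_filter, mem_ominus]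
  tauto

/-- decomposition of a set `π` meeting `α` in `n-1` elements -/
lemma decompose {α π : Finset (ZMod (2 * n + 2))} (hn : 1 ≤ n) (hαc : α.card = n)
    (hπc : π.card = n) (hint : (α ∩ π).card = n - 1) :
    ∃ r s, r ∈ α ∧ s ∉ α ∧ π = insert s (α.erase r) := by
  classical
  set A := α ∩ π with hA
  have hAα : A ⊆ α := Finset.inter_subset_left
  have hAπ : A ⊆ π := Finset.inter_subset_right
  have h1 : (α \ A).card = 1 := by
    rw [Finset.card_sdiff_of_subset hAα, hαc, hint]; omega
  obtain ⟨r, hr⟩ := Finset.card_eq_one.mp h1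
  have hrα : r ∈ α := by
    have : r ∈ α \ A := by rw [hr]; exact Finset.mem_singleton_self r
    exact (Finset.mem_sdiff.mp this).1
  have hrA : r ∉ A := by
    have : r ∈ α \ A := by rw [hr]; exact Finset.mem_singleton_self r
    exact (Finset.mem_sdiff.mp this).2
  have hAerase : A = α.erase r := by
    apply Finset.eq_of_subset_of_card_le
    · intro x hx
      exact Finset.mem_erase.mpr ⟨fun h => hrA (h ▸ hx), hAα hx⟩
    · rw [Finset.card_erase_of_mem hrα, hαc, hint]
  have h2 : (π \ A).card = 1 := by
    rw [Finset.card_sdiff_of_subset hAπ, hπc, hint]; omega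
  obtain ⟨s, hs⟩ := Finset.card_eq_one.mp h2
  have hsπ : s ∈ π := by
    have : s ∈ π \ A := by rw [hs]; exact Finset.mem_singleton_self s
    exact (Finset.mem_sdiff.mp this).1
  have hsA : s ∉ A := by
    have : s ∈ π \ A := by rw [hs]; exact Finset.mem_singleton_self s
    exact (Finset.mem_sdiff.mp this).2
  have hsα : s ∉ α := by
    intro h
    exact hsA (Finset.mem_inter.mpr ⟨h, hsπ⟩)
  refine ⟨r, s, hrα, hsα, ?_⟩
  have hins : insert s A ⊆ π := Finset.insert_subset hsπ hAπ
  have : π = insert s A := by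
    symm
    apply Finset.eq_of_subset_of_card_le hins
    rw [Finset.card_insert_of_notMem hsA, hπc, hint]
    omega
  rw [this, hAerase]

lemma parity_rs {α : Finset (ZMod (2 * n + 2))} {r s : ZMod (2 * n + 2)} {i : ℕ}
    (hE : (α.filter fun a => parity n a = 0).card = i)
    (hO : (α.filter fun a => parity n a = 1).card = n - i)
    (hr : r ∈ α) (hs : s ∉ α)
    (hπE : ((insert s (α.erase r)).filter fun a => parity n a = 0).card = i + 1)
    (hπO : ((insert s (α.erase r)).filter fun a => parity n a = 1).card = n - (i + 1)) :
    parity n r = 1 ∧ parity n s = 0 := by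
  classical
  have key : ∀ p : ZMod 2, ((insert s (α.erase r)).filter fun a => parity n a = p).card
      = (α.filter fun a => parity n a = p).card - (if parity n r = p then 1 else 0)
        + (if parity n s = p then 1 else 0) := by
    intro p
    rw [Finset.filter_insert, Finset.filter_erase]
    have hnot2 : s ∉ (α.filter fun a => parity n a = p).erase r :=
      fun h => hs (Finset.mem_filter.mp (Finset.mem_of_mem_erase h)).1
    have hecard : ((α.filter fun a => parity n a = p).erase r).card
        = (α.filter fun a => parity n a = p).card - (if parity n r = p then 1 else 0) := by
      by_cases hrp : parity n r = p
      · rw [if_pos hrp, Finset.card_erase_of_mem (Finset.mem_filter.mpr ⟨hr, hrp⟩)]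
      · have hnot : r ∉ α.filter fun a => parity n a = p :=
          fun h => hrp (Finset.mem_filter.mp h).2
        rw [if_neg hrp, Finset.erase_eq_of_notMem hnot, Nat.sub_zero]
    by_cases hsp : parity n s = p
    · rw [if_pos hsp, if_pos hsp, Finset.card_insert_of_notMem hnot2, hecard]
    · rw [if_neg hsp, if_neg hsp, hecard]
      exact (Nat.add_zero _).symm
  have hz : ∀ z : ZMod 2, z = 0 ∨ z = 1 := by decide
  have k0 := key 0
  have k1 := key 1
  rw [hπE, hE] at k0
  rw [hπO, hO] at k1
  rcases hz (parity n r) with hr0 | hr1 <;> rcases hz (parity n s) with hs0 | hs1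
  · -- r even, s even : even count stays i
    have hipos : 0 < i := by
      rw [← hE]
      exact Finset.card_pos.mpr ⟨r, Finset.mem_filter.mpr ⟨hr, hr0⟩⟩
    rw [if_pos hr0, if_pos hs0] at k0
    omega
  · have hipos : 0 < i := by
      rw [← hE]
      exact Finset.card_pos.mpr ⟨r, Finset.mem_filter.mpr ⟨hr, hr0⟩⟩
    rw [if_pos hr0, if_neg (by rw [hs1]; decide)] at k0
    omega
  · exact ⟨hr1, hs0⟩
  · rw [if_neg (by rw [hr1]; decide), if_neg (by rw [hs1]; decide)] at k0
    omega

lemma construct {α : Finset (ZMod (2 * n + 2))} {a : ZMod (2 * n + 2)} {i : ℕ}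
    (hn : 2 ≤ n) (hi : i ≤ n - 1) (hcard : α.card = n)
    (hstab : ∀ x : ZMod (2 * n + 2), ¬(x ∈ α ∧ x + 1 ∈ α))
    (hE : (α.filter fun x => parity n x = 0).card = i)
    (hO : (α.filter fun x => parity n x = 1).card = n - i)
    (ha : a ∈ α) (hap : parity n a = 1) (ha1 : a + 1 ∉ α) (ha2 : a + 2 ∉ α) :
    insert (a + 1) (α.erase a) ∈ Pset n (i + 1) ∧
      (α ∩ insert (a + 1) (α.erase a)).card = n - 1 := by
  classical
  have hae : a + 1 ∉ α.erase a := fun h => ha1 (Finset.mem_of_mem_erase h)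
  have hcardπ : (insert (a + 1) (α.erase a)).card = n := by
    rw [Finset.card_insert_of_notMem hae, Finset.card_erase_of_mem ha, hcard]
    omega
  have hstabπ : ∀ x : ZMod (2 * n + 2),
      ¬(x ∈ insert (a + 1) (α.erase a) ∧ x + 1 ∈ insert (a + 1) (α.erase a)) := by
    rintro x ⟨hx, hx1⟩
    rcases Finset.mem_insert.mp hx with rfl | hx'
    · rcases Finset.mem_insert.mp hx1 with h | h
      · exact shift_ne one_pos (by omega) (a + 1) (by simpa using h)
      · have : a + 2 ∈ α := by
          have := Finset.mem_of_mem_erase h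
          rwa [show a + 1 + 1 = a + 2 by ring] at this
        exact ha2 this
    · rcases Finset.mem_insert.mp hx1 with h | h
      · exact (Finset.mem_erase.mp hx').1 (add_right_cancel h)
      · exact hstab x ⟨Finset.mem_of_mem_erase hx', Finset.mem_of_mem_erase h⟩
  have hpa1 : parity n (a + 1) = 0 := by
    rw [parity_add_one, hap]; decide
  have hf0 : ((insert (a + 1) (α.erase a)).filter fun x => parity n x = 0).card = i + 1 := by
    rw [Finset.filter_insert, if_pos hpa1, Finset.filter_erase,
      Finset.erase_eq_of_notMem (fun h => by
        have := (Finset.mem_filter.mp h).2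
        rw [hap] at this
        exact (by decide : ¬ ((1 : ZMod 2) = 0)) this),
      Finset.card_insert_of_notMem (fun h => ha1 (Finset.mem_filter.mp h).1), hE]
  have hf1 : ((insert (a + 1) (α.erase a)).filter fun x => parity n x = 1).card
      = n - (i + 1) := by
    rw [Finset.filter_insert, if_neg (by rw [hpa1]; decide), Finset.filter_erase,
      Finset.card_erase_of_mem (Finset.mem_filter.mpr ⟨ha, hap⟩), hO]
    omega
  have hint : α ∩ insert (a + 1) (α.erase a) = α.erase a := by
    ext x
    simp only [Finset.mem_inter, Finset.mem_insert, Finset.mem_erase]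
    constructor
    · rintro ⟨hxα, rfl | ⟨hxa, _⟩⟩
      · exact absurd hxα ha1
      · exact ⟨hxa, hxα⟩
    · rintro ⟨hxa, hxα⟩
      exact ⟨hxα, Or.inr ⟨hxa, hxα⟩⟩
  refine ⟨⟨⟨hcardπ, hstabπ⟩, hf0, hf1⟩, ?_⟩
  rw [hint, Finset.card_erase_of_mem ha, hcard]

lemma card_even_bottoms (α : Finset (ZMod (2 * n + 2))) :
    (α.filter fun x => parity n x = 0 ∧ x - 2 ∉ α).card =
    (α.filter fun x => parity n x = 0 ∧ x + 2 ∉ α).card := by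
  classical
  have hbij : (α.filter fun x => parity n x = 0 ∧ x - 2 ∈ α).card
      = (α.filter fun x => parity n x = 0 ∧ x + 2 ∈ α).card := by
    apply Finset.card_nbij' (i := fun x => x - 2) (j := fun x => x + 2)
    · intro x hx
      obtain ⟨hxα, hxp, hx2⟩ := Finset.mem_filter.mp hx
      refine Finset.mem_filter.mpr ⟨hx2, ?_, ?_⟩
      · rw [parity_sub_two]; exact hxp
      · rw [sub_add_cancel]; exact hxα
    · intro x hx
      obtain ⟨hxα, hxp, hx2⟩ := Finset.mem_filter.mp hx
      refine Finset.mem_filter.mpr ⟨hx2, ?_, ?_⟩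
      · rw [parity_add_two]; exact hxp
      · rw [add_sub_cancel_right]; exact hxα
    · intro x _; exact sub_add_cancel _ _
    · intro x _; exact add_sub_cancel_right _ _
  have hsA := Finset.card_filter_add_card_filter_not
    (s := α.filter fun x => parity n x = 0) (p := fun x => x - 2 ∈ α)
  have hsB := Finset.card_filter_add_card_filter_not
    (s := α.filter fun x => parity n x = 0) (p := fun x => x + 2 ∈ α)
  simp only [Finset.filter_filter] at hsA hsB
  omega

lemma compl_eq (hn : 2 ≤ n) {α : Finset (ZMod (2 * n + 2))} (hcard : α.card = n)
    (hstab : ∀ x : ZMod (2 * n + 2), ¬(x ∈ α ∧ x + 1 ∈ α))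
    {a e : ZMod (2 * n + 2)} (ha : a ∈ α) (ha2 : a + 2 ∉ α) (he : e ∈ α) (he2 : e + 2 ∉ α)
    (hne : a ≠ e) :
    αᶜ = insert (a + 2) (insert (e + 2) (α.image (fun x => x + 1))) := by
  classical
  have hstab' : ∀ x ∈ α, x + 1 ∉ α := fun x hx h => hstab x ⟨hx, h⟩
  have hsub : insert (a + 2) (insert (e + 2) (α.image (fun x => x + 1))) ⊆ αᶜ := by
    intro x hx
    rw [Finset.mem_compl]
    rcases Finset.mem_insert.mp hx with rfl | hx
    · exact ha2
    rcases Finset.mem_insert.mp hx with rfl | hx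
    · exact he2
    · obtain ⟨y, hy, rfl⟩ := Finset.mem_image.mp hx
      exact hstab' y hy
  have himg_card : (α.image (fun x => x + 1)).card = n := by
    rw [Finset.card_image_of_injective _ (fun u v h => add_right_cancel h), hcard]
  have he2img : e + 2 ∉ α.image (fun x => x + 1) := by
    intro h
    obtain ⟨y, hy, hy2⟩ := Finset.mem_image.mp h
    have hye : y = e + 1 := by
      have : y + 1 = (e + 1) + 1 := by rw [hy2]; ring
      exact add_right_cancel this
    exact hstab' e he (hye ▸ hy)
  have ha2ins : a + 2 ∉ insert (e + 2) (α.image fun x => x + 1) := by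
    intro h
    rcases Finset.mem_insert.mp h with h | h
    · exact hne (add_right_cancel h)
    · obtain ⟨y, hy, hy2⟩ := Finset.mem_image.mp h
      have hya : y = a + 1 := by
        have : y + 1 = (a + 1) + 1 := by rw [hy2]; ring
        exact add_right_cancel this
      exact hstab' a ha (hya ▸ hy)
  have hcards : (insert (a + 2) (insert (e + 2) (α.image fun x => x + 1))).card = n + 2 := by
    rw [Finset.card_insert_of_notMem ha2ins, Finset.card_insert_of_notMem he2img, himg_card]
  symm
  apply Finset.eq_of_subset_of_card_le hsub
  rw [Finset.card_compl, hcards, hcard]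
  have huniv : Fintype.card (ZMod (2 * n + 2)) = 2 * n + 2 := ZMod.card _
  omega

end UUN

open UUN in
/-- For `α ∈ P_i` with `i ≤ n - 1`, there is a unique `π ∈ P_{i+1}` with
`|α ∩ π| = n - 1` and `|(α ⊖ 2) ∩ π| = n - 1`. -/
theorem unique_upper_neighbor (n i : ℕ) (hn : 2 ≤ n) (hi : i ≤ n - 1)
    (α : Finset (ZMod (2 * n + 2))) (hα : α ∈ Pset n i) :
    ∃! π : Finset (ZMod (2 * n + 2)), π ∈ Pset n (i + 1) ∧
      (α ∩ π).card = n - 1 ∧ ((ominus n α 2) ∩ π).card = n - 1 := by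
  classical
  obtain ⟨⟨hcard, hstab⟩, hE, hO⟩ := hα
  have hstab' : ∀ x ∈ α, x + 1 ∉ α := fun x hx h => hstab x ⟨hx, h⟩
  have hz : ∀ z : ZMod 2, z = 0 ∨ z = 1 := by decide
  -- find an odd top a
  have hOpos : 0 < (α.filter fun x => parity n x = 1).card := by rw [hO]; omega
  obtain ⟨x₀, hx₀⟩ := Finset.card_pos.mp hOpos
  rw [Finset.mem_filter] at hx₀
  obtain ⟨a, ha, hap', ha2⟩ := exists_top α (le_of_eq hcard) hx₀.1
  rw [hx₀.2] at hap'
  have ha1 : a + 1 ∉ α := hstab' a ha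
  have haK : a ∉ α.filter (fun x => x + 2 ∈ α) := fun h => ha2 (Finset.mem_filter.mp h).2
  have hKsplit : (α.filter (fun x => x + 2 ∈ α)).card
      + (α.filter (fun x => x + 2 ∉ α)).card = n := by
    rw [Finset.card_filter_add_card_filter_not, hcard]
  have hcompute : ∀ r s : ZMod (2 * n + 2), s ∉ α →
      (ominus n α 2) ∩ insert s (α.erase r) =
        if s + 2 ∈ α then insert s ((α.filter (fun x => x + 2 ∈ α)).erase r)
        else (α.filter (fun x => x + 2 ∈ α)).erase r := by
    intro r s hs
    rw [Finset.inter_comm]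
    by_cases h : s + 2 ∈ α
    · rw [if_pos h, Finset.insert_inter_of_mem (mem_ominus.mpr h), erase_inter_ominus]
    · rw [if_neg h, Finset.insert_inter_of_notMem (fun hc => h (mem_ominus.mp hc)),
        erase_inter_ominus]
  have key : ((ominus n α 2) ∩ insert (a + 1) (α.erase a)).card = n - 1 ∧
      (∀ r s : ZMod (2 * n + 2), r ∈ α → parity n r = 1 → s ∉ α → parity n s = 0 →
        IsStable n (insert s (α.erase r)) →
        ((ominus n α 2) ∩ insert s (α.erase r)).card = n - 1 → r = a ∧ s = a + 1) := by
    rcases Nat.eq_zero_or_pos i with hi0 | hipos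
    · -- case i = 0 : all elements odd
      subst hi0
      have hEempty : α.filter (fun x => parity n x = 0) = ∅ := Finset.card_eq_zero.mp hE
      have allodd : ∀ x ∈ α, parity n x = 1 := by
        intro x hx
        rcases hz (parity n x) with h0 | h1
        · exact absurd (Finset.mem_filter.mpr ⟨hx, h0⟩) (by rw [hEempty]; simp)
        · exact h1
      have hc0 : ∀ x : ZMod (2 * n + 2), parity n x = 1 → x ∉ α → x = a + 2 := by
        have hαsub : α ⊆ Finset.univ.filter (fun x => parity n x = 1) :=
          fun x hx => Finset.mem_filter.mpr ⟨Finset.mem_univ x, allodd x hx⟩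
        have hs1 : ((Finset.univ.filter (fun x : ZMod (2 * n + 2) => parity n x = 1))
            \ α).card = 1 := by
          rw [Finset.card_sdiff_of_subset hαsub, odds_card, hcard]
          omega
        obtain ⟨c, hc⟩ := Finset.card_eq_one.mp hs1
        have hac : a + 2 = c := by
          have : a + 2 ∈ (Finset.univ.filter
              (fun x : ZMod (2 * n + 2) => parity n x = 1)) \ α := by
            rw [Finset.mem_sdiff]
            exact ⟨Finset.mem_filter.mpr ⟨Finset.mem_univ _,
              by rw [parity_add_two]; exact hap'⟩, ha2⟩
          rw [hc] at this
          exact Finset.mem_singleton.mp this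
        intro x hx1 hxα
        have : x ∈ (Finset.univ.filter
            (fun x : ZMod (2 * n + 2) => parity n x = 1)) \ α := by
          rw [Finset.mem_sdiff]
          exact ⟨Finset.mem_filter.mpr ⟨Finset.mem_univ _, hx1⟩, hxα⟩
        rw [hc] at this
        rw [Finset.mem_singleton.mp this, ← hac]
      have hs2not : ∀ s : ZMod (2 * n + 2), parity n s = 0 → s + 2 ∉ α := by
        intro s hs h
        have := allodd _ h
        rw [parity_add_two, hs] at this
        exact (by decide : ¬ ((0 : ZMod 2) = 1)) this
      have hT : α.filter (fun x => x + 2 ∉ α) = {a} := by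
        apply Finset.Subset.antisymm
        · intro x hx
          obtain ⟨hxα, hx2⟩ := Finset.mem_filter.mp hx
          have hx2p : parity n (x + 2) = 1 := by rw [parity_add_two]; exact allodd x hxα
          have := hc0 (x + 2) hx2p hx2
          exact Finset.mem_singleton.mpr (add_right_cancel this)
        · intro x hx
          rw [Finset.mem_singleton.mp hx]
          exact Finset.mem_filter.mpr ⟨ha, ha2⟩
      have hKcard : (α.filter (fun x => x + 2 ∈ α)).card = n - 1 := by
        rw [hT] at hKsplit
        simp only [Finset.card_singleton] at hKsplit
        omega
      constructor
      · rw [hcompute a (a + 1) ha1, if_neg (hs2not (a + 1) (by rw [parity_add_one, hap']; decide)),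
          Finset.erase_eq_of_notMem haK, hKcard]
      · intro r s hr hrp hs hsp hπstab hcnt
        rw [hcompute r s hs, if_neg (hs2not s hsp)] at hcnt
        have hrK : r ∉ α.filter (fun x => x + 2 ∈ α) := by
          intro hrK
          rw [Finset.card_erase_of_mem hrK, hKcard] at hcnt
          omega
        have hr2 : r + 2 ∉ α := fun h => hrK (Finset.mem_filter.mpr ⟨hr, h⟩)
        have hra : r = a := by
          have := hc0 (r + 2) (by rw [parity_add_two]; exact hrp) hr2
          exact add_right_cancel this
        subst hra
        refine ⟨rfl, ?_⟩
        -- use stability of π to pin down s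
        have hsπ : s ∈ insert s (α.erase r) := Finset.mem_insert_self _ _
        have hs1 : s + 1 ∉ insert s (α.erase r) := fun h => hπstab.2 s ⟨hsπ, h⟩
        have hsm1 : s - 1 ∉ insert s (α.erase r) := by
          intro h
          exact hπstab.2 (s - 1) ⟨h, by rw [sub_add_cancel]; exact hsπ⟩
        by_cases hsa : s + 1 ∈ α
        · -- then s + 1 = r = a
          have hs1r : s + 1 = r := by
            by_contra hne
            exact hs1 (Finset.mem_insert.mpr (Or.inr (Finset.mem_erase.mpr ⟨hne, hsa⟩)))
          exfalso
          by_cases hsm : s - 1 ∈ α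
          · have hsm1r : s - 1 = r := by
              by_contra hne
              exact hsm1 (Finset.mem_insert.mpr (Or.inr (Finset.mem_erase.mpr ⟨hne, hsm⟩)))
            have : s + 1 = s - 1 := by rw [hs1r, hsm1r]
            have h2 : (s - 1) + 2 = s - 1 := by
              rw [show (s - 1) + 2 = s + 1 by ring, this]
            exact shift_ne (c := 2) (by omega) (by omega) (s - 1) (by simpa using h2)
          · have := hc0 (s - 1) (by rw [parity_sub_one, hsp]; decide) hsm
            -- s - 1 = a + 2 = (s+1) + 2 = s + 3
            rw [← hs1r] at this
            have h4 : s + 4 = s := by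
              have := congrArg (fun z => z + 1) this
              rw [sub_add_cancel] at this
              rw [show s + 4 = s + 1 + 2 + 1 by ring, ← this]
            exact shift_ne (c := 4) (by omega) (by omega) s (by simpa using h4)
        · have := hc0 (s + 1) (by rw [parity_add_one, hsp]; decide) hsa
          rw [show r + 2 = (r + 1) + 1 by ring] at this
          exact add_right_cancel this
    · -- case i ≥ 1 : there is also an even top e
      have hEpos : 0 < (α.filter fun x => parity n x = 0).card := by rw [hE]; omega
      obtain ⟨y₀, hy₀⟩ := Finset.card_pos.mp hEpos
      rw [Finset.mem_filter] at hy₀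
      obtain ⟨e, he, hep', he2⟩ := exists_top α (le_of_eq hcard) hy₀.1
      rw [hy₀.2] at hep'
      have hne : a ≠ e := by
        intro h
        rw [h, hep'] at hap'
        exact (by decide : ¬ ((0 : ZMod 2) = 1)) hap'
      have hcompl := compl_eq hn hcard hstab ha ha2 he he2 hne
      have ha3 : a + 3 ∈ α := by
        by_contra h
        have hmem : a + 3 ∈ αᶜ := Finset.mem_compl.mpr h
        rw [hcompl] at hmem
        rcases Finset.mem_insert.mp hmem with h1 | hmem
        · have : (a + 2) + 1 = a + 2 := by rw [show (a+2)+1 = a+3 by ring, h1]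
          exact shift_ne (c := 1) (by omega) (by omega) (a + 2) (by simpa using this)
        rcases Finset.mem_insert.mp hmem with h1 | hmem
        · have : e + 2 = (a + 1) + 2 := by rw [← h1]; ring
          exact ha1 ((add_right_cancel this) ▸ he)
        · obtain ⟨y, hy, hy2⟩ := Finset.mem_image.mp hmem
          have : y + 1 = (a + 2) + 1 := by rw [hy2]; ring
          exact ha2 ((add_right_cancel this) ▸ hy)
      have hTsub : ∀ x ∈ α, x + 2 ∉ α → x = a ∨ x = e := by
        intro x hx hx2
        have hmem : x + 2 ∈ αᶜ := Finset.mem_compl.mpr hx2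
        rw [hcompl] at hmem
        rcases Finset.mem_insert.mp hmem with h1 | hmem
        · exact Or.inl (add_right_cancel h1)
        rcases Finset.mem_insert.mp hmem with h1 | hmem
        · exact Or.inr (add_right_cancel h1)
        · obtain ⟨y, hy, hy2⟩ := Finset.mem_image.mp hmem
          exfalso
          have : y + 1 = (x + 1) + 1 := by rw [hy2]; ring
          exact hstab' x hx ((add_right_cancel this) ▸ hy)
      have hT : α.filter (fun x => x + 2 ∉ α) = {a, e} := by
        apply Finset.Subset.antisymm
        · intro x hx
          obtain ⟨hxα, hx2⟩ := Finset.mem_filter.mp hx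
          rcases hTsub x hxα hx2 with rfl | rfl
          · exact Finset.mem_insert_self _ _
          · exact Finset.mem_insert.mpr (Or.inr (Finset.mem_singleton_self _))
        · intro x hx
          rcases Finset.mem_insert.mp hx with rfl | hx
          · exact Finset.mem_filter.mpr ⟨ha, ha2⟩
          · rw [Finset.mem_singleton.mp hx]
            exact Finset.mem_filter.mpr ⟨he, he2⟩
      have hKcard : (α.filter (fun x => x + 2 ∈ α)).card = n - 2 := by
        rw [hT] at hKsplit
        rw [Finset.card_insert_of_notMem (fun h => hne (Finset.mem_singleton.mp h)),
          Finset.card_singleton] at hKsplit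
        omega
      have hpa3 : parity n (a + 3) = 0 := by
        rw [show a + 3 = (a + 1) + 2 by ring, parity_add_two, parity_add_one, hap']
        decide
      have hF3 : ∀ s : ZMod (2 * n + 2), parity n s = 0 → s ∉ α → s + 2 ∈ α → s = a + 1 := by
        intro s hsp hsα hs2
        have hEtsub : (α.filter fun x => parity n x = 0 ∧ x + 2 ∉ α) ⊆ {e} := by
          intro x hx
          obtain ⟨hxα, hxp, hx2⟩ := Finset.mem_filter.mp hx
          rcases hTsub x hxα hx2 with rfl | rfl
          · rw [hap'] at hxp
            exact absurd hxp (by decide)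
          · exact Finset.mem_singleton_self _
        have hEb1 : (α.filter fun x => parity n x = 0 ∧ x - 2 ∉ α).card ≤ 1 := by
          rw [card_even_bottoms]
          calc (α.filter fun x => parity n x = 0 ∧ x + 2 ∉ α).card
              ≤ ({e} : Finset _).card := Finset.card_le_card hEtsub
            _ = 1 := Finset.card_singleton _
        have hm1 : s + 2 ∈ α.filter fun x => parity n x = 0 ∧ x - 2 ∉ α :=
          Finset.mem_filter.mpr ⟨hs2, by rw [parity_add_two]; exact hsp,
            by rw [add_sub_cancel_right]; exact hsα⟩
        have hm2 : a + 3 ∈ α.filter fun x => parity n x = 0 ∧ x - 2 ∉ α :=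
          Finset.mem_filter.mpr ⟨ha3, hpa3, by rw [show a + 3 - 2 = a + 1 by ring]; exact ha1⟩
        have heq : s + 2 = a + 3 := Finset.card_le_one.mp hEb1 _ hm1 _ hm2
        have : s + 2 = (a + 1) + 2 := by rw [heq]; ring
        exact add_right_cancel this
      constructor
      · rw [hcompute a (a + 1) ha1,
          if_pos (show (a + 1) + 2 ∈ α by rw [show (a+1)+2 = a+3 by ring]; exact ha3),
          Finset.erase_eq_of_notMem haK,
          Finset.card_insert_of_notMem (fun h => ha1 (Finset.mem_filter.mp h).1), hKcard]
        omega
      · intro r s hr hrp hs hsp _ hcnt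
        rw [hcompute r s hs] at hcnt
        by_cases hs2 : s + 2 ∈ α
        · rw [if_pos hs2] at hcnt
          have hr2 : r + 2 ∉ α := by
            intro hr2
            have hrK : r ∈ α.filter (fun x => x + 2 ∈ α) := Finset.mem_filter.mpr ⟨hr, hr2⟩
            have hle : (insert s ((α.filter (fun x => x + 2 ∈ α)).erase r)).card
                ≤ ((α.filter (fun x => x + 2 ∈ α)).erase r).card + 1 :=
              Finset.card_insert_le _ _
            have hKpos : 0 < (α.filter (fun x => x + 2 ∈ α)).card :=
              Finset.card_pos.mpr ⟨r, hrK⟩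
            rw [hKcard] at hKpos
            rw [hcnt, Finset.card_erase_of_mem hrK, hKcard] at hle
            omega
          have hra : r = a := by
            rcases hTsub r hr hr2 with h | h
            · exact h
            · rw [h, hep'] at hrp
              exact absurd hrp (by decide)
          exact ⟨hra, hF3 s hsp hs hs2⟩
        · rw [if_neg hs2] at hcnt
          exfalso
          have hle : ((α.filter (fun x => x + 2 ∈ α)).erase r).card
              ≤ (α.filter (fun x => x + 2 ∈ α)).card := Finset.card_erase_le
          rw [hcnt, hKcard] at hle
          omega
  obtain ⟨hP1, hP2⟩ := key
  obtain ⟨hconstr, hint1⟩ := construct hn hi hcard hstab hE hO ha hap' ha1 ha2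
  refine ⟨insert (a + 1) (α.erase a), ⟨hconstr, hint1, hP1⟩, ?_⟩
  rintro π ⟨⟨⟨hπcard, hπstab⟩, hπE, hπO⟩, h1, h2⟩
  obtain ⟨r, s, hr, hs, hπeq⟩ := decompose (by omega) hcard hπcard h1
  subst hπeq
  have hrs := parity_rs hE hO hr hs hπE hπO
  obtain ⟨hra, hsa⟩ := hP2 r s hr hrs.1 hs hrs.2 ⟨hπcard, hπstab⟩ h2
  rw [hra, hsa]
end
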